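/- arXiv:1407.4994 — 5 statements merged into one kernel-verified Lean document; each statement's English description precedes it below -/
import Mathlib

section
/- There exist C > 0 and N ∈ ℕ such that for every integer m ≥ N and every real number λ satisfying |λ − ν_{m−k}| ≥ a^{−2} |k| · |2m+2 − k| for all integers k with k ≠ 0 and k ≠ 2m+2, one has ∑_{k ∈ ℤ, k ≠ 0, k ≠ 2m+2} |1/(λ − ν_{m−k}) − 1/(ν_m − ν_{m−k})| ≤ C |λ − ν_m| / m. -/
open MeasureTheory Filter Set intervalIntegral

noncomputable section

/-- The complex exponential `e^{2π i n x / a}`. -/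
def e2 (a : ℝ) (n : ℤ) (x : ℝ) : ℂ :=
  Complex.exp (((2 * Real.pi * n * x / a : ℝ) : ℂ) * Complex.I)

/-- The `n`-th Fourier coefficient `c_n = (1/a) ∫₀^a q(x) e^{-2π i n x/a} dx`. -/
def fc (a : ℝ) (q : ℝ → ℝ) (n : ℤ) : ℂ :=
  (1 / (a : ℂ)) * ∫ x in (0:ℝ)..a, (q x : ℂ) * e2 a (-n) x

/-- `ρ(m)`: the maximum of the two uniform norms of `x ↦ ∫₀ˣ q(t) e^{∓2(2m+2)π i t/a} dt`. -/
def rho (a : ℝ) (q : ℝ → ℝ) (m : ℕ) : ℝ :=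
  max (⨆ x : Set.Icc (0:ℝ) a, ‖∫ t in (0:ℝ)..(x : ℝ), (q t : ℂ) * e2 a (-(2*(m:ℤ)+2)) t‖)
      (⨆ x : Set.Icc (0:ℝ) a, ‖∫ t in (0:ℝ)..(x : ℝ), (q t : ℂ) * e2 a (2*(m:ℤ)+2) t‖)

/-- `Q(x) = (1/a) ∫₀ˣ q(t) dt`. -/
def Qf (a : ℝ) (q : ℝ → ℝ) (x : ℝ) : ℝ :=
  (1 / a) * ∫ t in (0:ℝ)..x, q t

/-- `Q₀ = (1/a) ∫₀^a Q(x) dx`. -/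
def Q0 (a : ℝ) (q : ℝ → ℝ) : ℝ :=
  (1 / a) * ∫ x in (0:ℝ)..a, Qf a q x

/-- `G⁺(x,m) = (1/a)∫₀ˣ q(t) e^{-2(2m+2)π i t/a} dt − (c_{2m+2}/a) x`. -/
def Gp (a : ℝ) (q : ℝ → ℝ) (m : ℕ) (x : ℝ) : ℂ :=
  (1 / (a : ℂ)) * (∫ t in (0:ℝ)..x, (q t : ℂ) * e2 a (-(2*(m:ℤ)+2)) t)
    - (fc a q (2*(m:ℤ)+2) / a) * x

/-- `G⁻(x,m) = (1/a)∫₀ˣ q(t) e^{+2(2m+2)π i t/a} dt − (c_{−(2m+2)}/a) x`. -/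
def Gm (a : ℝ) (q : ℝ → ℝ) (m : ℕ) (x : ℝ) : ℂ :=
  (1 / (a : ℂ)) * (∫ t in (0:ℝ)..x, (q t : ℂ) * e2 a (2*(m:ℤ)+2) t)
    - (fc a q (-(2*(m:ℤ)+2)) / a) * x

/-- `G₀⁺(m) = (1/a) ∫₀^a G⁺(x,m) dx`. -/
def Gp0 (a : ℝ) (q : ℝ → ℝ) (m : ℕ) : ℂ :=
  (1 / (a : ℂ)) * ∫ x in (0:ℝ)..a, Gp a q m x

/-- `G₀⁻(m) = (1/a) ∫₀^a G⁻(x,m) dx`. -/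
def Gm0 (a : ℝ) (q : ℝ → ℝ) (m : ℕ) : ℂ :=
  (1 / (a : ℂ)) * ∫ x in (0:ℝ)..a, Gm a q m x

/-- The pairing `(f,g) = (1/a) ∫₀^a f(x) conj(g(x)) dx`. -/
def ip (a : ℝ) (f g : ℝ → ℂ) : ℂ :=
  (1 / (a : ℂ)) * ∫ x in (0:ℝ)..a, f x * (starRingEnd ℂ) (g x)

/-- `ν_j = ((2j+2)π/a)²`. -/
def nuZ (a : ℝ) (j : ℤ) : ℝ :=
  ((2 * (j : ℝ) + 2) * Real.pi / a) ^ 2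

/-- `Ψ` is an eigenfunction of `y'' + (λ − q) y = 0` with the periodic boundary
conditions `y(0) = y(a)`, `y'(0) = y'(a)`: `Ψ` is not identically zero, continuously
differentiable, `Ψ'` is absolutely continuous on `[0,a]` (i.e. it is the integral of
an integrable function `Ψ''`), and the equation holds a.e. on `[0,a]`. -/
def IsEigenfunc (a : ℝ) (q : ℝ → ℝ) (lam : ℝ) (Ψ : ℝ → ℂ) : Prop :=
  (∃ x ∈ Set.Icc (0:ℝ) a, Ψ x ≠ 0) ∧
  ∃ Ψ' Ψ'' : ℝ → ℂ,
    (∀ x, HasDerivAt Ψ (Ψ' x) x) ∧ Continuous Ψ' ∧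
    MeasureTheory.IntegrableOn Ψ'' (Set.Icc 0 a) ∧
    (∀ x ∈ Set.Icc (0:ℝ) a, Ψ' x = Ψ' 0 + ∫ t in (0:ℝ)..x, Ψ'' t) ∧
    (∀ᵐ x ∂(MeasureTheory.volume.restrict (Set.Icc (0:ℝ) a)),
      Ψ'' x + ((lam : ℂ) - (q x : ℂ)) * Ψ x = 0) ∧
    Ψ 0 = Ψ a ∧ Ψ' 0 = Ψ' a

/-- `λ` is a periodic eigenvalue if it has an eigenfunction. -/
def IsPeriodicEV (a : ℝ) (q : ℝ → ℝ) (lam : ℝ) : Prop :=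
  ∃ Ψ : ℝ → ℂ, IsEigenfunc a q lam Ψ

end
set_option maxHeartbeats 1000000 in
/-- there are `C > 0` and `N` such that for every integer `m ≥ N` and
every real `λ` with `|λ − ν_{m−k}| ≥ a⁻²|k||2m+2−k|` for all `k ≠ 0, 2m+2`, one has
`∑_{k ≠ 0, 2m+2} |1/(λ−ν_{m−k}) − 1/(ν_m−ν_{m−k})| ≤ C|λ−ν_m|/m`. -/
theorem statement2 (a : ℝ) (ha : 0 < a) :
    ∃ C > (0:ℝ), ∃ N : ℕ, ∀ m : ℤ, (N : ℤ) ≤ m → ∀ lam : ℝ,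
      (∀ k : ℤ, k ≠ 0 → k ≠ 2*m+2 →
        (|(k : ℝ)| * |2*(m:ℝ)+2 - (k : ℝ)|) / a^2 ≤ |lam - nuZ a (m - k)|) →
      (∑' k : {k : ℤ // k ≠ 0 ∧ k ≠ 2*m+2},
          |1 / (lam - nuZ a (m - (k : ℤ))) - 1 / (nuZ a m - nuZ a (m - (k : ℤ)))|)
        ≤ C * |lam - nuZ a m| / (m : ℝ) := by
  have hπ : (0:ℝ) < Real.pi := Real.pi_pos
  set S : ℝ := ∑' k : ℤ, 1/(k:ℝ)^2 with hS
  have hSsum : Summable (fun k : ℤ => 1/(k:ℝ)^2) :=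
    (Real.summable_one_div_int_pow (p := 2)).mpr one_lt_two
  have hS0 : 0 ≤ S := tsum_nonneg (fun k => by positivity)
  refine ⟨a^4 * (S+1) / Real.pi^2, by positivity, 1, ?_⟩
  intro m hm lam hlam
  have hm1 : (1:ℝ) ≤ (m:ℝ) := by exact_mod_cast hm
  have hmpos : (0:ℝ) < (m:ℝ) := lt_of_lt_of_le one_pos hm1
  set L : ℝ := |lam - nuZ a m| with hL
  have hL0 : 0 ≤ L := abs_nonneg _
  set B : ℝ := L * a^4 / (2 * Real.pi^2 * (m:ℝ)^2) with hB
  have hB0 : 0 ≤ B := by positivity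
  clear_value L B
  -- pointwise bound
  have key : ∀ k : {k : ℤ // k ≠ 0 ∧ k ≠ 2*m+2},
      |1 / (lam - nuZ a (m - (k : ℤ))) - 1 / (nuZ a m - nuZ a (m - (k : ℤ)))|
        ≤ B * (1/(((k:ℤ)):ℝ)^2 + 1/((2*(m:ℝ)+2) - ((k:ℤ):ℝ))^2) := by
    rintro ⟨k, hk0, hkn⟩
    set u : ℝ := (k:ℝ) with hu
    set v : ℝ := (2*(m:ℝ)+2) - (k:ℝ) with hv
    have hune : u ≠ 0 := Int.cast_ne_zero.mpr hk0
    have hvne : v ≠ 0 := by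
      simp only [hv, sub_ne_zero]
      intro h
      apply hkn
      have : (k:ℝ) = ((2*m+2 : ℤ) : ℝ) := by push_cast; linarith
      exact_mod_cast this
    have hu2 : 0 < u^2 := by positivity
    have hv2 : 0 < v^2 := by positivity
    have huv : u + v = 2*(m:ℝ)+2 := by rw [hu, hv]; ring
    have hy : nuZ a m - nuZ a (m - k) = 4 * Real.pi^2 * u * v / a^2 := by
      unfold nuZ; field_simp; push_cast; ring
    have hyne : nuZ a m - nuZ a (m - k) ≠ 0 := by
      rw [hy]
      have := mul_ne_zero hune hvne
      positivity
    have hyabs : |nuZ a m - nuZ a (m - k)| = 4 * Real.pi^2 * |u| * |v| / a^2 := by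
      rw [hy, abs_div, abs_mul, abs_mul, abs_mul]
      rw [abs_of_nonneg (by norm_num : (0:ℝ) ≤ 4), abs_of_nonneg (sq_nonneg Real.pi),
        abs_of_nonneg (sq_nonneg a)]
    clear_value u v
    have hx : |u| * |v| / a^2 ≤ |lam - nuZ a (m - k)| := by
      rw [hu, hv]; exact hlam k hk0 hkn
    have hxpos : 0 < |lam - nuZ a (m - k)| := by
      refine lt_of_lt_of_le ?_ hx
      have h1 : 0 < |u| := abs_pos.mpr hune
      have h2 : 0 < |v| := abs_pos.mpr hvne
      exact div_pos (mul_pos h1 h2) (by positivity)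
    have hxne : lam - nuZ a (m - k) ≠ 0 := by
      intro h; rw [h, abs_zero] at hxpos; exact lt_irrefl 0 hxpos
    have hdiff : 1 / (lam - nuZ a (m - k)) - 1 / (nuZ a m - nuZ a (m - k))
        = (nuZ a m - lam) / ((lam - nuZ a (m - k)) * (nuZ a m - nuZ a (m - k))) := by
      field_simp
      ring
    have hnum : |nuZ a m - lam| = L := by rw [hL, abs_sub_comm]
    have hden : 4 * Real.pi^2 * u^2 * v^2 / a^4
        ≤ |lam - nuZ a (m - k)| * |nuZ a m - nuZ a (m - k)| := by
      have h1 : (|u| * |v| / a^2) * (4 * Real.pi^2 * |u| * |v| / a^2)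
          ≤ |lam - nuZ a (m - k)| * |nuZ a m - nuZ a (m - k)| :=
        mul_le_mul hx (le_of_eq hyabs.symm) (by positivity) (abs_nonneg _)
      calc 4 * Real.pi^2 * u^2 * v^2 / a^4
          = (|u| * |v| / a^2) * (4 * Real.pi^2 * |u| * |v| / a^2) := by
            rw [show u^2 = |u|^2 from (sq_abs u).symm, show v^2 = |v|^2 from (sq_abs v).symm]
            ring
        _ ≤ _ := h1
    have hdenpos : 0 < 4 * Real.pi^2 * u^2 * v^2 / a^4 := by positivity
    calc |1 / (lam - nuZ a (m - k)) - 1 / (nuZ a m - nuZ a (m - k))|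
        = L / (|lam - nuZ a (m - k)| * |nuZ a m - nuZ a (m - k)|) := by
          rw [hdiff, abs_div, abs_mul, hnum]
      _ ≤ L / (4 * Real.pi^2 * u^2 * v^2 / a^4) :=
          div_le_div_of_nonneg_left hL0 hdenpos hden
      _ ≤ B * (1/u^2 + 1/v^2) := by
          have hsum2 : (m:ℝ)^2 ≤ 2*(u^2+v^2) := by nlinarith [sq_nonneg (u-v), hm1, huv]
          have e1 : L / (4 * Real.pi^2 * u^2 * v^2 / a^4)
              = (L * a^4 / (2*Real.pi^2)) * (1/(2*u^2*v^2)) := by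
            rw [div_div_eq_mul_div]; ring
          have e2 : B * (1/u^2 + 1/v^2)
              = (L * a^4 / (2*Real.pi^2)) * ((u^2+v^2)/((m:ℝ)^2*u^2*v^2)) := by
            rw [hB]; field_simp; ring
          rw [e1, e2]
          apply mul_le_mul_of_nonneg_left _ (by positivity)
          rw [div_le_div_iff₀ (by positivity) (by positivity)]
          nlinarith [mul_le_mul_of_nonneg_right hsum2 (le_of_lt (mul_pos hu2 hv2))]
  -- summability facts
  have hg1 : Summable (fun k : ℤ => 1/(k:ℝ)^2) := hSsum
  have hg2 : Summable (fun k : ℤ => 1/((2*(m:ℝ)+2) - (k:ℝ))^2) := by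
    have h2 := (Equiv.subLeft (2*m+2 : ℤ)).summable_iff.mpr hSsum
    apply h2.congr
    intro k
    simp [Equiv.subLeft_apply, Function.comp]
  have hs1 : Summable (fun k : {k : ℤ // k ≠ 0 ∧ k ≠ 2*m+2} => 1/(((k:ℤ)):ℝ)^2) :=
    hg1.comp_injective Subtype.val_injective
  have hs2 : Summable (fun k : {k : ℤ // k ≠ 0 ∧ k ≠ 2*m+2} =>
      1/((2*(m:ℝ)+2) - ((k:ℤ):ℝ))^2) :=
    hg2.comp_injective Subtype.val_injective
  have hG : Summable (fun k : {k : ℤ // k ≠ 0 ∧ k ≠ 2*m+2} =>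
      B * (1/(((k:ℤ)):ℝ)^2 + 1/((2*(m:ℝ)+2) - ((k:ℤ):ℝ))^2)) :=
    ((hs1.add hs2).mul_left B)
  have hF : Summable (fun k : {k : ℤ // k ≠ 0 ∧ k ≠ 2*m+2} =>
      |1 / (lam - nuZ a (m - (k : ℤ))) - 1 / (nuZ a m - nuZ a (m - (k : ℤ)))|) :=
    Summable.of_nonneg_of_le (fun k => abs_nonneg _) key hG
  -- sum bounds
  have hsub1 : (∑' k : {k : ℤ // k ≠ 0 ∧ k ≠ 2*m+2}, 1/(((k:ℤ)):ℝ)^2) ≤ S :=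
    Summable.tsum_le_tsum_of_inj Subtype.val Subtype.val_injective
      (fun c _ => by positivity) (fun k => le_refl _)
      hs1 hg1
  have htrans : (∑' k : ℤ, 1/((2*(m:ℝ)+2) - (k:ℝ))^2) = S := by
    rw [hS, ← (Equiv.subLeft (2*m+2 : ℤ)).tsum_eq (fun k : ℤ => 1/(k:ℝ)^2)]
    congr 1; funext k
    simp [Equiv.subLeft_apply]
  have hsub2 : (∑' k : {k : ℤ // k ≠ 0 ∧ k ≠ 2*m+2}, 1/((2*(m:ℝ)+2) - ((k:ℤ):ℝ))^2) ≤ S := by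
    rw [← htrans]
    exact Summable.tsum_le_tsum_of_inj Subtype.val Subtype.val_injective
      (fun c _ => by positivity) (fun k => le_refl _)
      hs2 hg2
  calc (∑' k : {k : ℤ // k ≠ 0 ∧ k ≠ 2*m+2},
          |1 / (lam - nuZ a (m - (k : ℤ))) - 1 / (nuZ a m - nuZ a (m - (k : ℤ)))|)
      ≤ ∑' k : {k : ℤ // k ≠ 0 ∧ k ≠ 2*m+2},
          B * (1/(((k:ℤ)):ℝ)^2 + 1/((2*(m:ℝ)+2) - ((k:ℤ):ℝ))^2) :=
        Summable.tsum_le_tsum key hF hG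
    _ = B * ((∑' k : {k : ℤ // k ≠ 0 ∧ k ≠ 2*m+2}, 1/(((k:ℤ)):ℝ)^2)
          + (∑' k : {k : ℤ // k ≠ 0 ∧ k ≠ 2*m+2}, 1/((2*(m:ℝ)+2) - ((k:ℤ):ℝ))^2)) := by
        rw [tsum_mul_left, Summable.tsum_add hs1 hs2]
    _ ≤ B * (S + S) := by
        apply mul_le_mul_of_nonneg_left (add_le_add hsub1 hsub2) hB0
    _ ≤ (a^4 * (S+1) / Real.pi^2) * L / (m:ℝ) := by
        rw [hB]
        rw [div_mul_eq_mul_div, div_le_div_iff₀ (by positivity) hmpos]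
        have hrw : a^4*(S+1)/Real.pi^2*L*(2*Real.pi^2*(m:ℝ)^2)
            = 2*a^4*(S+1)*L*(m:ℝ)^2 := by
          field_simp
        rw [hrw]
        have hmm : (m:ℝ) ≤ (m:ℝ)^2 := by nlinarith
        have h1 : L*a^4*S*(m:ℝ) ≤ L*a^4*S*(m:ℝ)^2 :=
          mul_le_mul_of_nonneg_left hmm
            (mul_nonneg (mul_nonneg hL0 (by positivity : (0:ℝ) ≤ a^4)) hS0)
        have h3 : (0:ℝ) ≤ L*a^4*(m:ℝ)^2 := by positivity
        nlinarith [h1, h3]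
end

section
/- For every m ∈ ℕ, the series ∑_{m₁ ∈ ℤ, m₁ ≠ 0, m₁ ≠ 2m+2} c_{m₁} c_{2m+2−m₁} / (m₁ (2m+2−m₁)) converges absolutely and equals −(4π²/a) ∫₀^a (Q(x) − Q₀)² e^{−2(2m+2)π i x/a} dx. -/
open MeasureTheory Filter Set intervalIntegral

section S9aux
open Complex AddCircle

namespace S9

lemma e2_eq {a : ℝ} (n : ℤ) (x : ℝ) :
    e2 a n x = fourier n (x : AddCircle a) := by
  rw [fourier_coe_apply, e2]
  congr 1
  push_cast
  ring

lemma qInt {a : ℝ} {q : ℝ → ℝ} (ha : 0 < a)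
    (hq : MeasureTheory.IntegrableOn q (Set.Icc 0 a))
    (hper : ∀ x, q (x + a) = q x) :
    ∀ t₁ t₂ : ℝ, IntervalIntegrable q MeasureTheory.volume t₁ t₂ := by
  have hp : Function.Periodic q a := hper
  have h0 : IntervalIntegrable q volume 0 a := by
    rw [intervalIntegrable_iff_integrableOn_Icc_of_le ha.le]; exact hq
  have hk : ∀ k : ℤ, IntervalIntegrable q volume (k * a) (k * a + a) := by
    intro k
    have h1 := h0.comp_sub_right (k * a)
    have hfun : (fun x => q (x - k * a)) = q := by
      funext x
      have := (hp.zsmul (-k)) x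
      simpa [zsmul_eq_mul, sub_eq_add_neg] using this
    rw [hfun] at h1
    convert h1 using 1 <;> ring
  have hn : ∀ n : ℕ, ∀ k : ℤ, IntervalIntegrable q volume (k * a) (k * a + n * a) := by
    intro n
    induction n with
    | zero => intro k; simp
    | succ n ih =>
      intro k
      have h2 := hk (k + n)
      have : ((k + n : ℤ) : ℝ) * a = k * a + n * a := by push_cast; ring
      rw [this] at h2
      have := (ih k).trans h2
      convert this using 1
      push_cast; ring
  intro t₁ t₂
  set t := min t₁ t₂ with ht
  set s := max t₁ t₂ with hs
  set k : ℤ := ⌊t / a⌋ with hkdef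
  have hka : (k : ℝ) * a ≤ t := by
    rw [hkdef]
    have := Int.floor_le (t / a)
    calc (⌊t/a⌋ : ℝ) * a ≤ (t / a) * a := by nlinarith
    _ = t := by field_simp
  obtain ⟨n, hn'⟩ := exists_nat_gt ((s - k * a) / a)
  have hsn : s ≤ k * a + n * a := by nlinarith [div_lt_iff₀ ha |>.mp hn']
  have hbound := hn n k
  apply hbound.mono_set
  rw [Set.uIcc_of_le (by nlinarith : (k:ℝ) * a ≤ k * a + n * a)]
  apply Set.uIcc_subset_Icc <;> constructor
  · exact le_trans hka (min_le_left _ _)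
  · exact le_trans (le_max_left _ _) hsn
  · exact le_trans hka (min_le_right _ _)
  · exact le_trans (le_max_right _ _) hsn


lemma parts {a : ℝ} (ha : 0 < a) {g e : ℝ → ℂ}
    (hg : MeasureTheory.IntegrableOn g (Set.Ioc 0 a)) (he : Continuous e) :
    ∫ x in (0:ℝ)..a, (∫ t in (0:ℝ)..x, g t) * e x
      = ∫ t in (0:ℝ)..a, g t * ∫ x in t..a, e x := by
  have hgi : Integrable g (volume.restrict (Set.Ioc 0 a)) := hg
  have hei : Integrable e (volume.restrict (Set.Ioc 0 a)) := he.integrableOn_Ioc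
  have hs : MeasurableSet {p : ℝ × ℝ | p.2 ≤ p.1} :=
    measurableSet_le measurable_snd measurable_fst
  have hbase : Integrable (fun p : ℝ × ℝ => e p.1 * g p.2)
      ((volume.restrict (Set.Ioc 0 a)).prod (volume.restrict (Set.Ioc 0 a))) :=
    hei.mul_prod hgi
  have hKeq : (fun p : ℝ × ℝ => if p.2 ≤ p.1 then e p.1 * g p.2 else 0)
      = {p : ℝ × ℝ | p.2 ≤ p.1}.indicator (fun p => e p.1 * g p.2) := by
    funext p; simp [Set.indicator_apply]
  have hK : Integrable (fun p : ℝ × ℝ => if p.2 ≤ p.1 then e p.1 * g p.2 else 0)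
      ((volume.restrict (Set.Ioc 0 a)).prod (volume.restrict (Set.Ioc 0 a))) := by
    rw [hKeq]; exact hbase.indicator hs
  have swap := MeasureTheory.integral_integral_swap
    (f := fun x y : ℝ => if y ≤ x then e x * g y else 0)
    (μ := volume.restrict (Set.Ioc 0 a)) (ν := volume.restrict (Set.Ioc 0 a)) hK
  have hL : (∫ x in Set.Ioc 0 a, (∫ y in Set.Ioc 0 a, (if y ≤ x then e x * g y else 0)))
      = ∫ x in (0:ℝ)..a, (∫ t in (0:ℝ)..x, g t) * e x := by
    rw [intervalIntegral.integral_of_le ha.le]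
    apply setIntegral_congr_fun measurableSet_Ioc
    intro x hx
    show (∫ y in Set.Ioc 0 a, (if y ≤ x then e x * g y else 0))
        = (∫ t in (0:ℝ)..x, g t) * e x
    calc ∫ y in Set.Ioc 0 a, (if y ≤ x then e x * g y else 0)
        = ∫ y in Set.Ioc 0 a, (Set.Iic x).indicator (fun y => e x * g y) y := by
          apply setIntegral_congr_fun measurableSet_Ioc
          intro y _
          simp [Set.indicator_apply]
      _ = ∫ y in Set.Ioc 0 a ∩ Set.Iic x, e x * g y :=
          setIntegral_indicator measurableSet_Iic
      _ = ∫ y in Set.Ioc 0 x, e x * g y := by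
          rw [Set.Ioc_inter_Iic, min_eq_right hx.2]
      _ = e x * ∫ y in Set.Ioc 0 x, g y := MeasureTheory.integral_const_mul _ _
      _ = (∫ t in (0:ℝ)..x, g t) * e x := by
          rw [intervalIntegral.integral_of_le hx.1.le]; ring
  have hR : (∫ y in Set.Ioc 0 a, (∫ x in Set.Ioc 0 a, (if y ≤ x then e x * g y else 0)))
      = ∫ t in (0:ℝ)..a, g t * ∫ x in t..a, e x := by
    rw [intervalIntegral.integral_of_le ha.le]
    apply setIntegral_congr_fun measurableSet_Ioc
    intro y hy
    show (∫ x in Set.Ioc 0 a, (if y ≤ x then e x * g y else 0))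
        = g y * ∫ x in y..a, e x
    have h2 : Set.Ioc 0 a ∩ Set.Ici y = Set.Icc y a := by
      ext x
      simp only [Set.mem_inter_iff, Set.mem_Ioc, Set.mem_Ici, Set.mem_Icc]
      constructor
      · rintro ⟨⟨_, hxa⟩, hyx⟩; exact ⟨hyx, hxa⟩
      · rintro ⟨hyx, hxa⟩; exact ⟨⟨lt_of_lt_of_le hy.1 hyx, hxa⟩, hyx⟩
    calc ∫ x in Set.Ioc 0 a, (if y ≤ x then e x * g y else 0)
        = ∫ x in Set.Ioc 0 a, (Set.Ici y).indicator (fun x => e x * g y) x := by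
          apply setIntegral_congr_fun measurableSet_Ioc
          intro x _
          simp [Set.indicator_apply]
      _ = ∫ x in Set.Ioc 0 a ∩ Set.Ici y, e x * g y :=
          setIntegral_indicator measurableSet_Ici
      _ = ∫ x in Set.Icc y a, e x * g y := by rw [h2]
      _ = ∫ x in Set.Ioc y a, e x * g y := MeasureTheory.integral_Icc_eq_integral_Ioc
      _ = (∫ x in Set.Ioc y a, e x) * g y := MeasureTheory.integral_mul_const _ _
      _ = g y * ∫ x in y..a, e x := by
          rw [intervalIntegral.integral_of_le hy.2]; ring
  rw [← hL, ← hR]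
  exact swap


variable {a : ℝ} {q : ℝ → ℝ}

lemma intq0 (ha : 0 < a) (hc0 : fc a q 0 = 0) : ∫ x in (0:ℝ)..a, q x = 0 := by
  have : fc a q 0 = (1 / (a:ℂ)) * ((∫ x in (0:ℝ)..a, q x : ℝ) : ℂ) := by
    rw [fc]
    congr 1
    rw [← intervalIntegral.integral_ofReal]
    apply intervalIntegral.integral_congr
    intro x _
    simp [e2]
  rw [this] at hc0
  have ha' : (a:ℂ) ≠ 0 := by exact_mod_cast ha.ne'
  have := mul_eq_zero.mp hc0
  rcases this with h | h
  · exact absurd h (by simp [ha'])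
  · exact_mod_cast h

lemma Qfcont (ha : 0 < a) (hqi : ∀ t₁ t₂ : ℝ, IntervalIntegrable q MeasureTheory.volume t₁ t₂) :
    Continuous (Qf a q) := by
  apply Continuous.mul continuous_const
  exact intervalIntegral.continuous_primitive hqi 0

lemma Qfper (ha : 0 < a) (hper : ∀ x, q (x + a) = q x)
    (hqi : ∀ t₁ t₂ : ℝ, IntervalIntegrable q MeasureTheory.volume t₁ t₂)
    (h0 : ∫ x in (0:ℝ)..a, q x = 0) :
    Function.Periodic (Qf a q) a := by
  intro x
  have hp : Function.Periodic q a := hper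
  have h1 : ∫ t in (0:ℝ)..(x+a), q t = (∫ t in (0:ℝ)..x, q t) + ∫ t in x..(x+a), q t :=
    (intervalIntegral.integral_add_adjacent_intervals (hqi 0 x) (hqi x (x+a))).symm
  have h2 : ∫ t in x..(x+a), q t = ∫ t in (0:ℝ)..(0+a), q t :=
    hp.intervalIntegral_add_eq x 0
  rw [Qf, Qf, h1, h2]
  rw [zero_add, h0]
  ring

lemma fourInt (ha : 0 < a) {n : ℤ} (hn : n ≠ 0) (t s : ℝ) :
    ∫ x in t..s, fourier (-n) (x : AddCircle a)
      = ((a:ℂ) / (-2 * Real.pi * I * n)) *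
        (fourier (-n) (s : AddCircle a) - fourier (-n) (t : AddCircle a)) := by
  haveI : Fact (0 < a) := ⟨ha⟩
  have := intervalIntegral.integral_eq_sub_of_hasDerivAt (a := t) (b := s)
    (f := fun y : ℝ => (a : ℂ) / (-2 * Real.pi * I * n) * fourier (-n) (y : AddCircle a))
    (fun x _ => has_antideriv_at_fourier_neg ⟨ha⟩ hn x)
    (((map_continuous (fourier (-n))).comp (AddCircle.continuous_mk' _)).intervalIntegrable _ _)
  rw [this]
  ring

lemma coe_a_eq (ha : 0 < a) : ((a : ℝ) : AddCircle a) = ((0:ℝ) : AddCircle a) := by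
  simpa using AddCircle.coe_add_period a 0

lemma four_zero_one (ha : 0 < a) : fourier (-(0:ℤ)) ((0:ℝ) : AddCircle a) = 1 := by
  simp

lemma coeffn [Fact (0 < a)] (ha : 0 < a)
    (hq : MeasureTheory.IntegrableOn q (Set.Icc 0 a))
    (hper : ∀ x, q (x + a) = q x)
    (hc0 : fc a q 0 = 0)
    {F : AddCircle a → ℂ}
    (hF : ∀ x : ℝ, F ((x : ℝ) : AddCircle a) = ((Qf a q x - Q0 a q : ℝ) : ℂ))
    {n : ℤ} (hn : n ≠ 0) :
    fourierCoeff F n = fc a q n / (2 * Real.pi * I * n) := by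
  have hqi := qInt ha hq hper
  have ha' : (a : ℂ) ≠ 0 := by exact_mod_cast ha.ne'
  have hπ : (Real.pi : ℂ) ≠ 0 := by exact_mod_cast Real.pi_ne_zero
  have hn' : ((n:ℤ) : ℂ) ≠ 0 := by exact_mod_cast hn
  set E : ℝ → ℂ := fun x => fourier (-n) ((x : ℝ) : AddCircle a) with hE
  have hEcont : Continuous E := (map_continuous (fourier (-n))).comp (AddCircle.continuous_mk' _)
  -- the coefficient as an interval integral
  rw [fourierCoeff_eq_intervalIntegral F n 0]
  rw [zero_add]
  have hI : ∀ x ∈ Set.uIcc (0:ℝ) a,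
      fourier (-n) ((x : ℝ) : AddCircle a) • F ((x:ℝ) : AddCircle a)
        = E x * ((Qf a q x : ℝ):ℂ) - ((Q0 a q : ℝ):ℂ) * E x := by
    intro x _
    rw [hF x, smul_eq_mul]
    push_cast
    ring
  rw [intervalIntegral.integral_congr hI]
  have hQcont : Continuous fun x => ((Qf a q x : ℝ) : ℂ) :=
    Complex.continuous_ofReal.comp (Qfcont ha hqi)
  rw [intervalIntegral.integral_sub (f := fun x => E x * ((Qf a q x : ℝ) : ℂ))
    (g := fun x => ((Q0 a q : ℝ) : ℂ) * E x)
    ((hEcont.mul hQcont).intervalIntegrable _ _)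
    ((continuous_const.mul hEcont).intervalIntegrable _ _)]
  -- ∫ E = 0
  have hE0 : ∫ x in (0:ℝ)..a, E x = 0 := by
    rw [hE]
    rw [fourInt ha hn 0 a, coe_a_eq ha]
    ring
  have hconstE : ∫ x in (0:ℝ)..a, ((Q0 a q : ℝ):ℂ) * E x = 0 := by
    rw [intervalIntegral.integral_const_mul, hE0, mul_zero]
  rw [hconstE, sub_zero]
  -- main integral via parts
  have hgIoc : MeasureTheory.IntegrableOn (fun t => ((q t : ℝ):ℂ)) (Set.Ioc 0 a) :=
    (hq.mono_set Set.Ioc_subset_Icc_self).ofReal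
  have hgInt : IntervalIntegrable (fun t => ((q t : ℝ):ℂ)) MeasureTheory.volume 0 a := by
    rw [intervalIntegrable_iff_integrableOn_Ioc_of_le ha.le]
    exact hgIoc
  have hQcast : ∀ x : ℝ, ((Qf a q x : ℝ):ℂ) = (1/(a:ℂ)) * ∫ t in (0:ℝ)..x, ((q t : ℝ):ℂ) := by
    intro x
    rw [Qf, intervalIntegral.integral_ofReal]
    push_cast
    ring
  have key : ∫ x in (0:ℝ)..a, E x * ((Qf a q x : ℝ):ℂ)
      = (1/(a:ℂ)) * ∫ x in (0:ℝ)..a, (∫ t in (0:ℝ)..x, ((q t : ℝ):ℂ)) * E x := by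
    rw [← intervalIntegral.integral_const_mul]
    apply intervalIntegral.integral_congr
    intro x _
    show E x * ((Qf a q x : ℝ):ℂ) = 1 / (a:ℂ) * ((∫ t in (0:ℝ)..x, ((q t:ℝ):ℂ)) * E x)
    rw [hQcast x]
    ring
  rw [key, parts ha hgIoc hEcont]
  have hinner : ∀ t ∈ Set.uIcc (0:ℝ) a,
      ((q t : ℝ):ℂ) * ∫ x in t..a, E x
        = ((a:ℂ) / (-2 * Real.pi * I * n)) *
            (((q t:ℝ):ℂ) - ((q t:ℝ):ℂ) * E t) := by
    intro t _
    rw [hE]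
    rw [fourInt ha hn t a, coe_a_eq ha]
    have h1 : fourier (-n) (((0:ℝ)) : AddCircle a) = 1 := by
      have : (((0:ℝ)) : AddCircle a) = 0 := by norm_cast
      rw [this]
      simp
    rw [h1]
    ring
  rw [intervalIntegral.integral_congr hinner]
  rw [intervalIntegral.integral_const_mul]
  rw [intervalIntegral.integral_sub hgInt (hgInt.mul_continuousOn hEcont.continuousOn)]
  have h2 : ∫ t in (0:ℝ)..a, ((q t : ℝ):ℂ) = 0 := by
    rw [intervalIntegral.integral_ofReal, intq0 ha hc0]
    simp
  have h3 : ∫ t in (0:ℝ)..a, ((q t : ℝ):ℂ) * E t = (a:ℂ) * fc a q n := by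
    rw [fc]
    have : ∀ x ∈ Set.uIcc (0:ℝ) a, ((q x:ℝ):ℂ) * e2 a (-n) x = ((q x:ℝ):ℂ) * E x := by
      intro x _
      rw [e2_eq, hE]
    rw [intervalIntegral.integral_congr this]
    field_simp
  rw [h2, h3, zero_sub]
  have hI2 : (I:ℂ) ≠ 0 := Complex.I_ne_zero
  field_simp
  rw [Complex.real_smul]; push_cast; field_simp
  
lemma coeff0 [Fact (0 < a)] (ha : 0 < a)
    (hqi : ∀ t₁ t₂ : ℝ, IntervalIntegrable q MeasureTheory.volume t₁ t₂)
    {F : AddCircle a → ℂ}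
    (hF : ∀ x : ℝ, F ((x : ℝ) : AddCircle a) = ((Qf a q x - Q0 a q : ℝ) : ℂ)) :
    fourierCoeff F 0 = 0 := by
  have ha' : (a : ℂ) ≠ 0 := by exact_mod_cast ha.ne'
  rw [fourierCoeff_eq_intervalIntegral F 0 0, zero_add]
  have hI : ∀ x ∈ Set.uIcc (0:ℝ) a,
      fourier (-(0:ℤ)) ((x : ℝ) : AddCircle a) • F ((x:ℝ) : AddCircle a)
        = ((Qf a q x - Q0 a q : ℝ) : ℂ) := by
    intro x _
    rw [hF x]
    simp
  rw [intervalIntegral.integral_congr hI]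
  rw [intervalIntegral.integral_ofReal]
  have hQint : IntervalIntegrable (Qf a q) MeasureTheory.volume 0 a :=
    ((Qfcont ha hqi).intervalIntegrable _ _)
  have : ∫ x in (0:ℝ)..a, (Qf a q x - Q0 a q)
      = (∫ x in (0:ℝ)..a, Qf a q x) - a * Q0 a q := by
    rw [intervalIntegral.integral_sub hQint (intervalIntegrable_const)]
    simp [mul_comm]
  rw [this]
  have : ∫ x in (0:ℝ)..a, Qf a q x = a * Q0 a q := by
    rw [Q0]
    field_simp
  rw [this]
  simp


lemma conj_coeff [Fact (0 < a)] {F : AddCircle a → ℂ}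
    (hreal : ∀ z, (starRingEnd ℂ) (F z) = F z) (k : ℤ) :
    (starRingEnd ℂ) (fourierCoeff F k) = fourierCoeff F (-k) := by
  rw [fourierCoeff, fourierCoeff, ← integral_conj]
  apply MeasureTheory.integral_congr_ae
  apply ae_of_all
  intro z
  show (starRingEnd ℂ) (fourier (-k) z • F z) = fourier (- -k) z • F z
  rw [smul_eq_mul, smul_eq_mul, map_mul, hreal z, neg_neg]
  congr 1
  rw [← fourier_neg, neg_neg]

lemma pars [Fact (0 < a)] {F : AddCircle a → ℂ} (hFc : Continuous F)
    (hreal : ∀ z, (starRingEnd ℂ) (F z) = F z) (N : ℤ) :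
    Summable (fun n : ℤ => fourierCoeff F (N - n) * fourierCoeff F n) ∧
    ∑' n : ℤ, fourierCoeff F (N - n) * fourierCoeff F n
      = fourierCoeff (fun z => F z * F z) N := by
  set Fcm : C(AddCircle a, ℂ) := ⟨F, hFc⟩ with hFcm
  set Gcm : C(AddCircle a, ℂ) := ⟨fun z => F z * fourier N z,
    hFc.mul (map_continuous _)⟩ with hGcm
  set F₂ := ContinuousMap.toLp (E := ℂ) 2 haarAddCircle ℂ Fcm with hF₂
  set G₂ := ContinuousMap.toLp (E := ℂ) 2 haarAddCircle ℂ Gcm with hG₂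
  have hcoeF : ∀ n : ℤ, fourierCoeff (⇑F₂) n = fourierCoeff F n := by
    intro n
    apply MeasureTheory.integral_congr_ae
    filter_upwards [ContinuousMap.coeFn_toLp (p := 2) haarAddCircle (𝕜 := ℂ) Fcm] with z hz
    rw [hz]; rfl
  have hcoeG : ∀ n : ℤ, fourierCoeff (⇑G₂) n = fourierCoeff F (n - N) := by
    intro n
    have h1 : fourierCoeff (⇑G₂) n = fourierCoeff (⇑Gcm) n := by
      apply MeasureTheory.integral_congr_ae
      filter_upwards [ContinuousMap.coeFn_toLp (p := 2) haarAddCircle (𝕜 := ℂ) Gcm] with z hz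
      rw [hz]
    rw [h1]
    apply MeasureTheory.integral_congr_ae
    apply ae_of_all
    intro z
    show fourier (-n) z • (F z * fourier N z) = fourier (-(n - N)) z • F z
    rw [smul_eq_mul, smul_eq_mul, ← mul_assoc, mul_comm (fourier (-n) z) (F z),
      mul_assoc, ← fourier_add, show -n + N = -(n - N) by ring, mul_comm]
  have hinner1 : ∀ n : ℤ, (inner ℂ (fourierBasis n) F₂ : ℂ) = fourierCoeff F n := by
    intro n
    rw [← HilbertBasis.repr_apply_apply, fourierBasis_repr, hcoeF]
  have hinner2 : ∀ n : ℤ, (inner ℂ G₂ (fourierBasis n) : ℂ) = fourierCoeff F (N - n) := by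
    intro n
    rw [← inner_conj_symm, ← HilbertBasis.repr_apply_apply, fourierBasis_repr, hcoeG,
      conj_coeff hreal, neg_sub]
  have hinnerGF : (inner ℂ G₂ F₂ : ℂ) = fourierCoeff (fun z => F z * F z) N := by
    rw [MeasureTheory.L2.inner_def]
    have : ∫ z, (starRingEnd ℂ) (G₂ z) * F₂ z ∂haarAddCircle
        = ∫ z, fourier (-N) z • (F z * F z) ∂haarAddCircle := by
      apply MeasureTheory.integral_congr_ae
      filter_upwards [ContinuousMap.coeFn_toLp (p := 2) haarAddCircle (𝕜 := ℂ) Gcm,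
        ContinuousMap.coeFn_toLp (p := 2) haarAddCircle (𝕜 := ℂ) Fcm] with z hg hf
      rw [hg, hf]
      show (starRingEnd ℂ) (F z * fourier N z) * F z = fourier (-N) z • (F z * F z)
      rw [map_mul, hreal z, fourier_neg, smul_eq_mul]
      ring
    simp only [RCLike.inner_apply]
    refine (MeasureTheory.integral_congr_ae (ae_of_all _ fun z => mul_comm _ _)).trans ?_
    rw [this]
    rfl
  have hS := fourierBasis.summable_inner_mul_inner G₂ F₂
  have hT := fourierBasis.tsum_inner_mul_inner G₂ F₂
  have heq : (fun n : ℤ => (inner ℂ G₂ (fourierBasis n) : ℂ) * inner ℂ (fourierBasis n) F₂)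
      = fun n : ℤ => fourierCoeff F (N - n) * fourierCoeff F n := by
    funext n
    rw [hinner1, hinner2]
  rw [heq] at hS hT
  exact ⟨hS, by rw [hT, hinnerGF]⟩


end S9
end S9aux

/-- for every `m`, `∑_{m₁ ≠ 0, 2m+2} c_{m₁} c_{2m+2−m₁}/(m₁(2m+2−m₁))`
converges absolutely and equals `−(4π²/a) ∫₀^a (Q(x)−Q₀)² e^{−2(2m+2)π i x/a} dx`. -/
theorem statement9 (a : ℝ) (ha : 0 < a) (q : ℝ → ℝ)
    (hq : MeasureTheory.IntegrableOn q (Set.Icc 0 a))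
    (hper : ∀ x, q (x + a) = q x)
    (hc0 : fc a q 0 = 0) :
    ∀ m : ℕ,
      Summable (fun k : {k : ℤ // k ≠ 0 ∧ k ≠ 2*(m:ℤ)+2} =>
        ‖fc a q (k : ℤ) * fc a q (2*(m:ℤ)+2 - (k : ℤ))
          / (((k : ℤ) : ℂ) * ((2*(m:ℤ)+2 - (k : ℤ) : ℤ) : ℂ))‖) ∧
      (∑' k : {k : ℤ // k ≠ 0 ∧ k ≠ 2*(m:ℤ)+2},
          fc a q (k : ℤ) * fc a q (2*(m:ℤ)+2 - (k : ℤ))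
            / (((k : ℤ) : ℂ) * ((2*(m:ℤ)+2 - (k : ℤ) : ℤ) : ℂ)))
        = -(((4 * Real.pi^2 / a : ℝ)) : ℂ)
            * ∫ x in (0:ℝ)..a, (((Qf a q x - Q0 a q : ℝ)) : ℂ)^2
                * e2 a (-(2*(m:ℤ)+2)) x := by
  intro m
  haveI : Fact (0 < a) := ⟨ha⟩
  set N : ℤ := 2*(m:ℤ)+2 with hNdef
  have hN : N ≠ 0 := by omega
  have hqi := S9.qInt ha hq hper
  have h0 := S9.intq0 ha hc0
  have ha' : (a : ℂ) ≠ 0 := by exact_mod_cast ha.ne'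
  have hπ : (Real.pi : ℂ) ≠ 0 := by exact_mod_cast Real.pi_ne_zero
  have hI : (Complex.I : ℂ) ≠ 0 := Complex.I_ne_zero
  set f : ℝ → ℂ := fun x => ((Qf a q x - Q0 a q : ℝ) : ℂ) with hfdef
  have hfper : Function.Periodic f a := by
    intro x
    simp only [hfdef]
    rw [S9.Qfper ha hper hqi h0 x]
  set F : AddCircle a → ℂ := hfper.lift with hFdef
  have hF : ∀ x : ℝ, F ((x : ℝ) : AddCircle a) = f x := fun x => hfper.lift_coe x
  have hfcont : Continuous f :=
    Complex.continuous_ofReal.comp ((S9.Qfcont ha hqi).sub continuous_const)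
  have hFcont : Continuous F := by
    rw [hFdef]
    exact hfcont.quotient_liftOn' _
  have hreal : ∀ z, (starRingEnd ℂ) (F z) = F z := by
    intro z
    refine QuotientAddGroup.induction_on z (fun x => ?_)
    rw [hF x]
    exact Complex.conj_ofReal _
  obtain ⟨hS, hT⟩ := S9.pars hFcont hreal N
  set b : ℤ → ℂ := fun n => fourierCoeff F n with hbdef
  have hb0 : b 0 = 0 := S9.coeff0 ha hqi hF
  have hbn : ∀ n : ℤ, n ≠ 0 → b n = fc a q n / (2 * Real.pi * Complex.I * n) :=
    fun n hn => S9.coeffn ha hq hper hc0 hF hn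
  set h : ℤ → ℂ := fun n =>
    fc a q n * fc a q (N - n) / (((n : ℤ) : ℂ) * ((N - n : ℤ) : ℂ)) with hhdef
  have hzero : ∀ n : ℤ, n = 0 ∨ n = N → h n = 0 := by
    intro n hn
    rcases hn with rfl | rfl
    · simp [hhdef]
    · simp [hhdef]
  have hh : ∀ n : ℤ, h n = (-4 * (Real.pi:ℂ)^2) * (b (N - n) * b n) := by
    intro n
    by_cases hn0 : n = 0
    · rw [hzero n (Or.inl hn0), hn0, hb0]
      ring
    by_cases hnN : n = N
    · rw [hzero n (Or.inr hnN), hnN, sub_self, hb0]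
      ring
    · have hn' : ((n:ℤ):ℂ) ≠ 0 := by exact_mod_cast hn0
      have hm : (N - n : ℤ) ≠ 0 := sub_ne_zero.mpr (Ne.symm hnN)
      have hm' : (((N - n : ℤ)):ℂ) ≠ 0 := by exact_mod_cast hm
      show fc a q n * fc a q (N - n) / (((n : ℤ) : ℂ) * ((N - n : ℤ) : ℂ))
          = (-4 * (Real.pi:ℂ)^2) * (b (N - n) * b n)
      rw [hbn n hn0, hbn (N - n) hm, div_mul_div_comm]
      have key : (2*(Real.pi:ℂ)*Complex.I*((N-n : ℤ):ℂ)) * (2*(Real.pi:ℂ)*Complex.I*((n : ℤ):ℂ))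
          = (-4*(Real.pi:ℂ)^2) * (((N-n : ℤ):ℂ) * ((n : ℤ):ℂ)) := by
        linear_combination (4*(Real.pi:ℂ)^2*((N-n : ℤ):ℂ)*((n : ℤ):ℂ)) * Complex.I_sq
      rw [key]
      have h4 : (-4*(Real.pi:ℂ)^2) ≠ 0 := by
        simp [hπ]
      rw [← mul_div_assoc, mul_div_mul_left _ _ h4]
      ring
  have hsum : Summable h := by
    have := hS.mul_left (-4 * (Real.pi:ℂ)^2)
    apply this.congr
    intro n
    exact (hh n).symm
  have hsupp : Function.support h ⊆ {k : ℤ | k ≠ 0 ∧ k ≠ N} := by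
    intro n hn
    simp only [Set.mem_setOf_eq]
    constructor
    · rintro rfl; exact hn (hzero 0 (Or.inl rfl))
    · rintro rfl; exact hn (hzero N (Or.inr rfl))
  constructor
  · exact (summable_norm_iff.mpr hsum).subtype _
  · have h1 : (∑' k : {k : ℤ // k ≠ 0 ∧ k ≠ N}, h (k : ℤ)) = ∑' n : ℤ, h n :=
      tsum_subtype_eq_of_support_subset hsupp
    have h2 : ∑' n : ℤ, h n = (-4 * (Real.pi:ℂ)^2) * fourierCoeff (fun z => F z * F z) N := by
      rw [tsum_congr hh, tsum_mul_left, hT]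
    -- identify the coefficient with the target integral
    have h3 : fourierCoeff (fun z : AddCircle a => F z * F z) N
        = ((1/a : ℝ) : ℂ) * ∫ x in (0:ℝ)..a, f x ^ 2 * e2 a (-N) x := by
      rw [fourierCoeff_eq_intervalIntegral _ N 0, zero_add, Complex.real_smul]
      have hcg : ∀ x ∈ Set.uIcc (0:ℝ) a,
          fourier (-N) ((x:ℝ) : AddCircle a) • (F ((x:ℝ):AddCircle a) * F ((x:ℝ):AddCircle a))
            = f x ^ 2 * e2 a (-N) x := by
        intro x _
        rw [hF x, S9.e2_eq, smul_eq_mul]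
        ring
      rw [intervalIntegral.integral_congr hcg]
    calc (∑' k : {k : ℤ // k ≠ 0 ∧ k ≠ N},
          fc a q (k : ℤ) * fc a q (N - (k : ℤ))
            / (((k : ℤ) : ℂ) * ((N - (k : ℤ) : ℤ) : ℂ)))
        = ∑' n : ℤ, h n := h1
      _ = (-4 * (Real.pi:ℂ)^2) * (((1/a : ℝ) : ℂ) * ∫ x in (0:ℝ)..a, f x ^ 2 * e2 a (-N) x) := by
          rw [h2, h3]
      _ = -(((4 * Real.pi^2 / a : ℝ)) : ℂ)
            * ∫ x in (0:ℝ)..a, (((Qf a q x - Q0 a q : ℝ)) : ℂ)^2 * e2 a (-N) x := by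
          simp only [hfdef]
          push_cast
          ring
end

section
/- For every m ∈ ℕ, the series ∑_{m₁ ∈ ℤ, m₁ ≠ 2m+2, m₁ ≠ −(2m+2)} c_{m₁} c_{−m₁} / ((2m+2−m₁)(2m+2+m₁)) converges absolutely and equals −(4π²/a) ∫₀^a (G^+(x,m) − G₀^+(m))² e^{2(4m+4)π i x/a} dx. -/
open MeasureTheory Filter Set intervalIntegral

section Aux

open Complex

namespace S10

lemma e2_eq (a : ℝ) (j : ℤ) (x : ℝ) :
    e2 a j x = Complex.exp ((2 * Real.pi * Complex.I * j / a) * x) := by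
  unfold e2; congr 1; push_cast; ring

lemma e2_cont (a : ℝ) (j : ℤ) : Continuous (e2 a j) := by
  have h : e2 a j = fun x : ℝ => Complex.exp ((2 * Real.pi * Complex.I * j / a) * x) :=
    funext (e2_eq a j)
  rw [h]
  exact Complex.continuous_exp.comp (continuous_const.mul Complex.continuous_ofReal)

lemma e2_mul (a : ℝ) (j k : ℤ) (x : ℝ) : e2 a j x * e2 a k x = e2 a (j + k) x := by
  simp only [e2_eq, ← Complex.exp_add]; congr 1; push_cast; ring

lemma e2_zero (a : ℝ) (x : ℝ) : e2 a 0 x = 1 := by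
  rw [e2_eq]; push_cast; simp

lemma e2_at_zero (a : ℝ) (j : ℤ) : e2 a j 0 = 1 := by
  rw [e2_eq]; push_cast; simp

lemma e2_periodic (a : ℝ) (ha : a ≠ 0) (j : ℤ) : Function.Periodic (e2 a j) a := by
  have ha' : (a : ℂ) ≠ 0 := Complex.ofReal_ne_zero.mpr ha
  intro x
  simp only [e2_eq]
  rw [show ((2 * Real.pi * Complex.I * j / a) * ((x + a : ℝ) : ℂ))
      = (2 * Real.pi * Complex.I * j / a) * (x : ℂ) + (j : ℂ) * (2 * Real.pi * Complex.I) by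
    push_cast; field_simp]
  rw [Complex.exp_add, Complex.exp_int_mul_two_pi_mul_I, mul_one]

lemma e2_self (a : ℝ) (ha : a ≠ 0) (j : ℤ) : e2 a j a = 1 := by
  have := e2_periodic a ha j 0
  rw [zero_add] at this
  rw [this, e2_at_zero]

lemma coef_ne_zero (a : ℝ) (ha : a ≠ 0) {j : ℤ} (hj : j ≠ 0) :
    (2 * Real.pi * Complex.I * j / a : ℂ) ≠ 0 := by
  have hπ : ((Real.pi : ℝ) : ℂ) ≠ 0 := Complex.ofReal_ne_zero.mpr Real.pi_ne_zero
  have hj' : (j : ℂ) ≠ 0 := Int.cast_ne_zero.mpr hj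
  have ha' : (a : ℂ) ≠ 0 := Complex.ofReal_ne_zero.mpr ha
  exact div_ne_zero
    (mul_ne_zero (mul_ne_zero (mul_ne_zero two_ne_zero hπ) Complex.I_ne_zero) hj') ha'

lemma integral_e2 (a : ℝ) (ha : a ≠ 0) {j : ℤ} (hj : j ≠ 0) (s t : ℝ) :
    ∫ x in s..t, e2 a j x
      = (e2 a j t - e2 a j s) / (2 * Real.pi * Complex.I * j / a) := by
  simp only [e2_eq]
  exact integral_exp_mul_complex (coef_ne_zero a ha hj)

lemma integral_e2_self (a : ℝ) (ha : a ≠ 0) {j : ℤ} (hj : j ≠ 0) :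
    ∫ x in (0:ℝ)..a, e2 a j x = 0 := by
  rw [integral_e2 a ha hj, e2_self a ha, e2_at_zero, sub_self, zero_div]

lemma integral_x_e2 (a : ℝ) (ha : a ≠ 0) {j : ℤ} (hj : j ≠ 0) :
    ∫ x in (0:ℝ)..a, (x : ℂ) * e2 a j x
      = (a : ℂ) / (2 * Real.pi * Complex.I * j / a) := by
  set c : ℂ := 2 * Real.pi * Complex.I * j / a with hc_def
  have hc : c ≠ 0 := coef_ne_zero a ha hj
  have hD : ∀ x : ℝ, HasDerivAt (fun y : ℝ => Complex.exp (c * y) / c)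
      (Complex.exp (c * x)) x := by
    intro x
    conv => congr
    rw [← mul_div_cancel_right₀ (Complex.exp (c * x)) hc]
    apply ((Complex.hasDerivAt_exp _).comp x _).div_const c
    simpa only [mul_one, id_eq] using ((hasDerivAt_id (x : ℂ)).const_mul c).comp_ofReal
  have hU : ∀ x : ℝ, HasDerivAt (fun y : ℝ => (y : ℂ)) 1 x := fun x => by
    exact Complex.ofRealCLM.hasDerivAt (x := x)
  have hexpint : IntervalIntegrable (fun x : ℝ => Complex.exp (c * x)) volume 0 a :=
    (Complex.continuous_exp.comp (continuous_const.mul Complex.continuous_ofReal)).intervalIntegrable 0 a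
  have hIBP := intervalIntegral.integral_mul_deriv_eq_deriv_mul
    (u := fun y : ℝ => (y : ℂ)) (u' := fun _ => (1:ℂ))
    (v := fun y : ℝ => Complex.exp (c * y) / c) (v' := fun y : ℝ => Complex.exp (c * y))
    (fun x _ => hU x) (fun x _ => hD x) intervalIntegrable_const hexpint
  have ha' : (a : ℂ) ≠ 0 := Complex.ofReal_ne_zero.mpr ha
  have hca : c * (a : ℂ) = (j : ℂ) * (2 * Real.pi * Complex.I) := by
    rw [hc_def]
    field_simp
  have hexpa : Complex.exp (c * (a : ℂ)) = 1 := by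
    rw [hca, Complex.exp_int_mul_two_pi_mul_I]
  have hint0 : (∫ x in (0:ℝ)..a, (1:ℂ) * (Complex.exp (c * x) / c)) = 0 := by
    simp only [one_mul]
    rw [intervalIntegral.integral_div, integral_exp_mul_complex hc]
    rw [hexpa]
    norm_num
  simp only [e2_eq, ← hc_def]
  rw [hIBP, hint0, hexpa]
  push_cast
  field_simp
  simp

lemma periodic_intervalIntegrable {E : Type*} [NormedAddCommGroup E]
    {f : ℝ → E} {a : ℝ} (ha : 0 < a)
    (hper : Function.Periodic f a) (h0 : IntervalIntegrable f volume 0 a) :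
    ∀ s t : ℝ, IntervalIntegrable f volume s t := by
  have hk : ∀ k : ℤ, IntervalIntegrable f volume (k * a) (k * a + a) := by
    intro k
    have h2 := h0.comp_add_right (-(k * a))
    have hfe : (fun x => f (x + -((k:ℝ) * a))) = f := by
      funext x
      have := (hper.int_mul (-k)) x
      simpa [neg_mul] using this
    rw [hfe] at h2
    simpa [sub_neg_eq_add, add_comm] using h2
  have hn : ∀ n : ℕ, IntervalIntegrable f volume (-(n * a)) (n * a) := by
    intro n
    induction n with
    | zero => simp
    | succ n ih =>
      have h1 : IntervalIntegrable f volume ((n:ℝ) * a) ((n:ℝ) * a + a) := by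
        simpa using hk n
      have h2 := hk (-(n + 1))
      have e1 : (((-((n:ℤ) + 1)) : ℤ) : ℝ) = -((n:ℝ) + 1) := by push_cast; ring
      rw [e1] at h2
      have e2 : -((n:ℝ) + 1) * a + a = -((n:ℝ) * a) := by ring
      rw [e2] at h2
      have h3 := (h2.trans ih).trans h1
      have e3 : -((n:ℝ) + 1) * a = -(((n:ℝ) + 1) * a) := by ring
      rw [e3] at h3
      have e4 : ((n + 1 : ℕ) : ℝ) = (n:ℝ) + 1 := by push_cast; ring
      rw [show ((n + 1 : ℕ) : ℝ) * a = ((n:ℝ) + 1) * a from by push_cast; ring]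
      rw [show (n:ℝ) * a + a = ((n:ℝ) + 1) * a from by ring] at h3
      exact h3
  intro s t
  obtain ⟨n, hns⟩ := exists_nat_ge ((max |s| |t|) / a)
  have hna : max |s| |t| ≤ n * a := by
    rw [div_le_iff₀ ha] at hns
    exact hns
  have hbs : -((n:ℝ) * a) ≤ s ∧ s ≤ (n:ℝ) * a := by
    have := abs_le.mp ((le_max_left |s| |t|).trans hna)
    exact this
  have hbt : -((n:ℝ) * a) ≤ t ∧ t ≤ (n:ℝ) * a := by
    have := abs_le.mp ((le_max_right |s| |t|).trans hna)
    exact this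
  have hle : -((n:ℝ) * a) ≤ (n:ℝ) * a := le_trans hbs.1 hbs.2
  refine (hn n).mono_set ?_
  apply Set.uIcc_subset_uIcc <;> rw [Set.uIcc_of_le hle]
  · exact ⟨hbs.1, hbs.2⟩
  · exact ⟨hbt.1, hbt.2⟩

lemma fubini_triangle {a : ℝ} (ha : 0 < a) {f ψ : ℝ → ℂ}
    (hf : MeasureTheory.IntegrableOn f (Set.Ioc 0 a)) (hψ : Continuous ψ) :
    ∫ x in (0:ℝ)..a, (∫ t in (0:ℝ)..x, f t) * ψ x
      = ∫ t in (0:ℝ)..a, f t * (∫ x in t..a, ψ x) := by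
  set μ := MeasureTheory.volume.restrict (Set.Ioc (0:ℝ) a) with hμ
  set S : Set (ℝ × ℝ) := {p : ℝ × ℝ | p.2 ≤ p.1} with hS
  set B : ℝ × ℝ → ℂ := fun p => ψ p.1 * f p.2 with hB
  have hψμ : MeasureTheory.Integrable ψ μ := hψ.integrableOn_Ioc
  have hfμ : MeasureTheory.Integrable f μ := hf
  have hBint : MeasureTheory.Integrable B (μ.prod μ) := hψμ.mul_prod hfμ
  have hSmeas : MeasurableSet S := measurableSet_le measurable_snd measurable_fst
  have hKint : MeasureTheory.Integrable (S.indicator B) (μ.prod μ) := hBint.indicator hSmeas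
  have hswap := MeasureTheory.integral_integral_swap
    (f := fun x t => S.indicator B (x, t)) (μ := μ) (ν := μ) hKint
  have hL : ∀ x ∈ Set.Ioc (0:ℝ) a,
      (∫ t, S.indicator B (x, t) ∂μ) = (∫ t in (0:ℝ)..x, f t) * ψ x := by
    intro x hx
    have h1 : ∀ t : ℝ, S.indicator B (x, t)
        = (Set.Iic x).indicator (fun t => ψ x * f t) t := by
      intro t
      by_cases h : t ≤ x
      · rw [Set.indicator_of_mem (show (x, t) ∈ S from h),
          Set.indicator_of_mem (show t ∈ Set.Iic x from h)]
      · rw [Set.indicator_of_notMem (show (x, t) ∉ S from h),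
          Set.indicator_of_notMem (show t ∉ Set.Iic x from h)]
    simp_rw [h1]
    rw [hμ, MeasureTheory.integral_indicator measurableSet_Iic,
      MeasureTheory.Measure.restrict_restrict measurableSet_Iic]
    have h2 : Set.Iic x ∩ Set.Ioc 0 a = Set.Ioc 0 x := by
      rw [Set.inter_comm, Set.Ioc_inter_Iic, min_eq_right hx.2]
    rw [h2, MeasureTheory.integral_const_mul,
      intervalIntegral.integral_of_le (le_of_lt hx.1), mul_comm]
  have hR : ∀ t ∈ Set.Ioc (0:ℝ) a,
      (∫ x, S.indicator B (x, t) ∂μ) = f t * (∫ x in t..a, ψ x) := by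
    intro t ht
    have h1 : ∀ x : ℝ, S.indicator B (x, t)
        = (Set.Ici t).indicator (fun x => ψ x * f t) x := by
      intro x
      by_cases h : t ≤ x
      · rw [Set.indicator_of_mem (show (x, t) ∈ S from h),
          Set.indicator_of_mem (show x ∈ Set.Ici t from h)]
      · rw [Set.indicator_of_notMem (show (x, t) ∉ S from h),
          Set.indicator_of_notMem (show x ∉ Set.Ici t from h)]
    simp_rw [h1]
    rw [hμ, MeasureTheory.integral_indicator measurableSet_Ici,
      MeasureTheory.Measure.restrict_restrict measurableSet_Ici]
    have h2 : Set.Ici t ∩ Set.Ioc 0 a = Set.Icc t a := by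
      ext x
      simp only [Set.mem_inter_iff, Set.mem_Ici, Set.mem_Ioc, Set.mem_Icc]
      constructor
      · rintro ⟨h3, _, h5⟩; exact ⟨h3, h5⟩
      · rintro ⟨h3, h4⟩; exact ⟨h3, lt_of_lt_of_le ht.1 h3, h4⟩
    rw [h2, MeasureTheory.integral_mul_const, MeasureTheory.integral_Icc_eq_integral_Ioc,
      ← intervalIntegral.integral_of_le ht.2, mul_comm]
  rw [intervalIntegral.integral_of_le (le_of_lt ha), intervalIntegral.integral_of_le (le_of_lt ha)]
  calc ∫ x in Set.Ioc (0:ℝ) a, (∫ t in (0:ℝ)..x, f t) * ψ x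
      = ∫ x, (∫ t, S.indicator B (x, t) ∂μ) ∂μ := by
        rw [hμ]
        exact (MeasureTheory.setIntegral_congr_fun measurableSet_Ioc
          (fun x hx => (hL x hx).symm))
    _ = ∫ t, (∫ x, S.indicator B (x, t) ∂μ) ∂μ := hswap
    _ = ∫ t in Set.Ioc (0:ℝ) a, f t * (∫ x in t..a, ψ x) := by
        rw [hμ]
        exact MeasureTheory.setIntegral_congr_fun measurableSet_Ioc (fun t ht => hR t ht)

lemma fc_eq (a : ℝ) (ha : a ≠ 0) (q : ℝ → ℝ) (k : ℤ) :
    (∫ x in (0:ℝ)..a, (q x : ℂ) * e2 a (-k) x) = (a:ℂ) * fc a q k := by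
  have haC : (a:ℂ) ≠ 0 := Complex.ofReal_ne_zero.mpr ha
  unfold fc
  field_simp

lemma qc_int (a : ℝ) (ha : 0 < a) (q : ℝ → ℝ)
    (hq : MeasureTheory.IntegrableOn q (Set.Icc 0 a))
    (hper : ∀ x, q (x + a) = q x) :
    ∀ s t : ℝ, IntervalIntegrable (fun x => (q x : ℂ)) volume s t := by
  have hperC : Function.Periodic (fun x => (q x : ℂ)) a := fun x => by
    simp only [hper x]
  apply periodic_intervalIntegrable ha hperC
  rw [intervalIntegrable_iff_integrableOn_Ioc_of_le ha.le]
  exact (hq.mono_set Set.Ioc_subset_Icc_self).ofReal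

lemma Gp_eq (a : ℝ) (q : ℝ → ℝ) (m : ℕ) (x : ℝ) :
    Gp a q m x = (1/(a:ℂ)) * (∫ t in (0:ℝ)..x, (q t : ℂ) * e2 a (-(2*(m:ℤ)+2)) t)
      - (fc a q (2*(m:ℤ)+2) / a) * x := rfl

lemma Gp_cont (a : ℝ) (q : ℝ → ℝ)
    (hqc : ∀ s t : ℝ, IntervalIntegrable (fun x => (q x : ℂ)) volume s t) (m : ℕ) :
    Continuous (Gp a q m) := by
  have h : Gp a q m = fun x =>
      (1/(a:ℂ)) * (∫ t in (0:ℝ)..x, (q t : ℂ) * e2 a (-(2*(m:ℤ)+2)) t)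
        - (fc a q (2*(m:ℤ)+2) / a) * x := rfl
  rw [h]
  exact (continuous_const.mul (intervalIntegral.continuous_primitive
      (fun s t => (hqc s t).mul_continuousOn (e2_cont a _).continuousOn) 0)).sub
    (continuous_const.mul Complex.continuous_ofReal)

lemma F_add (a : ℝ) (ha : 0 < a) (q : ℝ → ℝ)
    (hqc : ∀ s t : ℝ, IntervalIntegrable (fun x => (q x : ℂ)) volume s t)
    (hper : ∀ x, q (x + a) = q x) (N : ℤ) (x : ℝ) :
    (∫ t in (0:ℝ)..(x+a), (q t : ℂ) * e2 a (-N) t)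
      = (∫ t in (0:ℝ)..x, (q t : ℂ) * e2 a (-N) t) + (a:ℂ) * fc a q N := by
  have ha0 : a ≠ 0 := ne_of_gt ha
  have hint : ∀ s t : ℝ, IntervalIntegrable (fun u => (q u : ℂ) * e2 a (-N) u) volume s t :=
    fun s t => (hqc s t).mul_continuousOn (e2_cont a (-N)).continuousOn
  have hperf : Function.Periodic (fun u => (q u : ℂ) * e2 a (-N) u) a := fun u => by
    simp only [hper u, e2_periodic a ha0 (-N) u]
  calc (∫ t in (0:ℝ)..(x+a), (q t : ℂ) * e2 a (-N) t)
      = (∫ t in (0:ℝ)..x, (q t : ℂ) * e2 a (-N) t)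
          + ∫ t in x..(x+a), (q t : ℂ) * e2 a (-N) t :=
        (intervalIntegral.integral_add_adjacent_intervals (hint 0 x) (hint x (x+a))).symm
    _ = (∫ t in (0:ℝ)..x, (q t : ℂ) * e2 a (-N) t)
          + ∫ t in (0:ℝ)..(0+a), (q t : ℂ) * e2 a (-N) t := by
        rw [hperf.intervalIntegral_add_eq x 0]
    _ = (∫ t in (0:ℝ)..x, (q t : ℂ) * e2 a (-N) t) + (a:ℂ) * fc a q N := by
        rw [zero_add, fc_eq a ha0 q N]

lemma Gp_periodic (a : ℝ) (ha : 0 < a) (q : ℝ → ℝ)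
    (hqc : ∀ s t : ℝ, IntervalIntegrable (fun x => (q x : ℂ)) volume s t)
    (hper : ∀ x, q (x + a) = q x) (m : ℕ) :
    Function.Periodic (Gp a q m) a := by
  have ha0 : a ≠ 0 := ne_of_gt ha
  have haC : (a:ℂ) ≠ 0 := Complex.ofReal_ne_zero.mpr ha0
  intro x
  rw [Gp_eq, Gp_eq, F_add a ha q hqc hper (2*(m:ℤ)+2) x]
  push_cast
  field_simp
  ring

lemma Gp_mean_zero (a : ℝ) (ha : 0 < a) (q : ℝ → ℝ)
    (hqc : ∀ s t : ℝ, IntervalIntegrable (fun x => (q x : ℂ)) volume s t) (m : ℕ) :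
    (∫ x in (0:ℝ)..a, (Gp a q m x - Gp0 a q m)) = 0 := by
  have ha0 : a ≠ 0 := ne_of_gt ha
  have haC : (a:ℂ) ≠ 0 := Complex.ofReal_ne_zero.mpr ha0
  rw [intervalIntegral.integral_sub ((Gp_cont a q hqc m).intervalIntegrable 0 a)
    intervalIntegrable_const, intervalIntegral.integral_const]
  unfold Gp0
  rw [sub_zero, Complex.real_smul]
  field_simp
  ring

lemma key_coeff (a : ℝ) (ha : 0 < a) (q : ℝ → ℝ)
    (hqc : ∀ s t : ℝ, IntervalIntegrable (fun x => (q x : ℂ)) volume s t)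
    (m : ℕ) {n : ℤ} (hn : n ≠ 0) :
    (∫ x in (0:ℝ)..a, (Gp a q m x - Gp0 a q m) * e2 a (-n) x)
      = (a : ℂ) * fc a q (2*(m:ℤ)+2 + n) / (2 * Real.pi * Complex.I * n) := by
  have ha0 : a ≠ 0 := ne_of_gt ha
  have haC : (a:ℂ) ≠ 0 := Complex.ofReal_ne_zero.mpr ha0
  have hπ : ((Real.pi : ℝ) : ℂ) ≠ 0 := Complex.ofReal_ne_zero.mpr Real.pi_ne_zero
  have hnC : (n : ℂ) ≠ 0 := Int.cast_ne_zero.mpr hn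
  have hc2 : (2 * (Real.pi:ℂ) * Complex.I * (n:ℂ)) ≠ 0 :=
    mul_ne_zero (mul_ne_zero (mul_ne_zero two_ne_zero hπ) Complex.I_ne_zero) hnC
  set N : ℤ := 2*(m:ℤ)+2 with hN
  set fR : ℝ → ℂ := fun t => (q t : ℂ) * e2 a (-N) t with hfR
  have hfRint : ∀ s t : ℝ, IntervalIntegrable fR volume s t := fun s t =>
    (hqc s t).mul_continuousOn (e2_cont a (-N)).continuousOn
  set F : ℝ → ℂ := fun x => ∫ t in (0:ℝ)..x, fR t with hF
  have hFcont : Continuous F := intervalIntegral.continuous_primitive hfRint 0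
  have hGp : ∀ x : ℝ, Gp a q m x = (1/(a:ℂ)) * F x - (fc a q N / a) * x := fun x => rfl
  have hfI : MeasureTheory.IntegrableOn fR (Set.Ioc 0 a) :=
    (intervalIntegrable_iff_integrableOn_Ioc_of_le ha.le).mp (hfRint 0 a)
  have hfub := fubini_triangle ha hfI (e2_cont a (-n))
  have hinner : ∀ t : ℝ, (∫ x in t..a, e2 a (-n) x)
      = (e2 a (-n) t - 1) * ((a:ℂ) / (2 * Real.pi * Complex.I * n)) := by
    intro t
    rw [integral_e2 a ha0 (neg_ne_zero.mpr hn), e2_self a ha0]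
    push_cast
    field_simp
    ring
  have hFint : (∫ x in (0:ℝ)..a, F x * e2 a (-n) x)
      = (∫ t in (0:ℝ)..a, fR t * (e2 a (-n) t - 1))
          * ((a:ℂ) / (2 * Real.pi * Complex.I * n)) := by
    rw [hfub]
    simp_rw [hinner, ← mul_assoc]
    rw [intervalIntegral.integral_mul_const]
  have h5 : (∫ t in (0:ℝ)..a, fR t * (e2 a (-n) t - 1))
      = (a:ℂ) * fc a q (N + n) - (a:ℂ) * fc a q N := by
    have e : ∀ t : ℝ, fR t * (e2 a (-n) t - 1)
        = (q t : ℂ) * e2 a (-(N+n)) t - fR t := by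
      intro t
      have h1 : fR t * (e2 a (-n) t - 1)
          = (q t : ℂ) * (e2 a (-N) t * e2 a (-n) t) - fR t := by
        simp only [hfR]; ring
      rw [h1, e2_mul, show (-N) + (-n) = -(N+n) from by ring]
    rw [intervalIntegral.integral_congr (fun t _ => e t),
      intervalIntegral.integral_sub
        ((hqc 0 a).mul_continuousOn (e2_cont a (-(N+n))).continuousOn) (hfRint 0 a)]
    rw [fc_eq a ha0 q (N+n)]
    congr 1
    exact fc_eq a ha0 q N
  have h6 : (∫ x in (0:ℝ)..a, (x:ℂ) * e2 a (-n) x)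
      = -((a:ℂ)^2 / (2 * Real.pi * Complex.I * n)) := by
    rw [integral_x_e2 a ha0 (neg_ne_zero.mpr hn)]
    push_cast
    field_simp
  have i1 : IntervalIntegrable (fun x => (1/(a:ℂ)) * (F x * e2 a (-n) x)) volume 0 a :=
    (continuous_const.mul (hFcont.mul (e2_cont a (-n)))).intervalIntegrable 0 a
  have i2 : IntervalIntegrable (fun x => (fc a q N / a) * ((x:ℂ) * e2 a (-n) x)) volume 0 a :=
    (continuous_const.mul (Complex.continuous_ofReal.mul (e2_cont a (-n)))).intervalIntegrable 0 a
  have i3 : IntervalIntegrable (fun x => Gp0 a q m * e2 a (-n) x) volume 0 a :=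
    (continuous_const.mul (e2_cont a (-n))).intervalIntegrable 0 a
  have hsplit : (∫ x in (0:ℝ)..a, (Gp a q m x - Gp0 a q m) * e2 a (-n) x)
      = (1/(a:ℂ)) * (∫ x in (0:ℝ)..a, F x * e2 a (-n) x)
        - (fc a q N / a) * (∫ x in (0:ℝ)..a, (x:ℂ) * e2 a (-n) x)
        - Gp0 a q m * (∫ x in (0:ℝ)..a, e2 a (-n) x) := by
    have e : ∀ x : ℝ, (Gp a q m x - Gp0 a q m) * e2 a (-n) x
        = ((1/(a:ℂ)) * (F x * e2 a (-n) x) - (fc a q N / a) * ((x:ℂ) * e2 a (-n) x))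
          - Gp0 a q m * e2 a (-n) x := by
      intro x
      rw [hGp x]
      ring
    rw [intervalIntegral.integral_congr (fun x _ => e x),
      intervalIntegral.integral_sub (i1.sub i2) i3,
      intervalIntegral.integral_sub i1 i2,
      intervalIntegral.integral_const_mul, intervalIntegral.integral_const_mul,
      intervalIntegral.integral_const_mul]
  rw [hsplit, hFint, h5, h6, integral_e2_self a ha0 (neg_ne_zero.mpr hn), mul_zero, sub_zero]
  field_simp
  ring

end S10

end Aux

/-- for every `m`, `∑_{m₁ ≠ ±(2m+2)} c_{m₁} c_{−m₁}/((2m+2−m₁)(2m+2+m₁))`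
converges absolutely and equals `−(4π²/a) ∫₀^a (G⁺(x,m)−G₀⁺(m))² e^{2(4m+4)π i x/a} dx`. -/
theorem statement10 (a : ℝ) (ha : 0 < a) (q : ℝ → ℝ)
    (hq : MeasureTheory.IntegrableOn q (Set.Icc 0 a))
    (hper : ∀ x, q (x + a) = q x)
    (hc0 : fc a q 0 = 0) :
    ∀ m : ℕ,
      Summable (fun k : {k : ℤ // k ≠ 2*(m:ℤ)+2 ∧ k ≠ -(2*(m:ℤ)+2)} =>
        ‖fc a q (k : ℤ) * fc a q (-(k : ℤ))
          / (((2*(m:ℤ)+2 - (k : ℤ) : ℤ) : ℂ) * ((2*(m:ℤ)+2 + (k : ℤ) : ℤ) : ℂ))‖) ∧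
      (∑' k : {k : ℤ // k ≠ 2*(m:ℤ)+2 ∧ k ≠ -(2*(m:ℤ)+2)},
          fc a q (k : ℤ) * fc a q (-(k : ℤ))
            / (((2*(m:ℤ)+2 - (k : ℤ) : ℤ) : ℂ) * ((2*(m:ℤ)+2 + (k : ℤ) : ℤ) : ℂ)))
        = -(((4 * Real.pi^2 / a : ℝ)) : ℂ)
            * ∫ x in (0:ℝ)..a, (Gp a q m x - Gp0 a q m)^2 * e2 a (4*(m:ℤ)+4) x := by
  intro m
  have ha0 : a ≠ 0 := ne_of_gt ha
  have haC : (a:ℂ) ≠ 0 := Complex.ofReal_ne_zero.mpr ha0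
  have hπ : ((Real.pi : ℝ) : ℂ) ≠ 0 := Complex.ofReal_ne_zero.mpr Real.pi_ne_zero
  haveI : Fact (0 < a) := ⟨ha⟩
  have hqc := S10.qc_int a ha q hq hper
  set N : ℤ := 2*(m:ℤ)+2 with hN
  set gR : ℝ → ℂ := fun x => Gp a q m x - Gp0 a q m with hgR
  have hgRcont : Continuous gR := (S10.Gp_cont a q hqc m).sub continuous_const
  have hgRper : Function.Periodic gR a := fun x => by
    simp only [hgR]
    rw [S10.Gp_periodic a ha q hqc hper m x]
  set gC : AddCircle a → ℂ := AddCircle.liftIco a 0 gR with hgC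
  have hgCcont : Continuous gC := AddCircle.liftIco_zero_continuous
    (by simpa using (hgRper 0).symm) hgRcont.continuousOn
  have hgClift : ∀ x : ℝ, x ∈ Set.Ico (0:ℝ) a → gC ↑x = gR x := fun x hx =>
    AddCircle.liftIco_zero_coe_apply hx
  -- conversion of Haar integrals to interval integrals
  have hconv : ∀ h : AddCircle a → ℂ,
      (∫ z, h z ∂AddCircle.haarAddCircle) = (1/(a:ℂ)) * ∫ x in (0:ℝ)..a, h ↑x := by
    intro h
    have h1 := AddCircle.intervalIntegral_preimage a 0 h
    rw [AddCircle.volume_eq_smul_haarAddCircle, MeasureTheory.integral_smul_measure,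
      zero_add, ENNReal.toReal_ofReal ha.le] at h1
    rw [h1, Complex.real_smul]
    field_simp
  -- Fourier coefficients of gC
  have hcoeff_int : ∀ n : ℤ, fourierCoeff gC n
      = (1/(a:ℂ)) * ∫ x in (0:ℝ)..a, e2 a (-n) x * gR x := by
    intro n
    show (∫ z : AddCircle a, fourier (-n) z • gC z ∂AddCircle.haarAddCircle) = _
    rw [hconv]
    congr 1
    rw [intervalIntegral.integral_of_le ha.le, intervalIntegral.integral_of_le ha.le,
      MeasureTheory.integral_Ioc_eq_integral_Ioo, MeasureTheory.integral_Ioc_eq_integral_Ioo]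
    apply MeasureTheory.setIntegral_congr_fun measurableSet_Ioo
    intro x hx
    beta_reduce
    rw [smul_eq_mul, hgClift x ⟨le_of_lt hx.1, hx.2⟩]
    congr 1
    rw [fourier_coe_apply, S10.e2_eq]
    congr 1
    push_cast
    ring
  have hg0 : fourierCoeff gC 0 = 0 := by
    rw [hcoeff_int 0]
    have e : ∀ x : ℝ, e2 a (-0) x * gR x = gR x := fun x => by
      rw [neg_zero, S10.e2_zero, one_mul]
    rw [intervalIntegral.integral_congr (fun x _ => e x)]
    rw [show (∫ x in (0:ℝ)..a, gR x) = 0 from S10.Gp_mean_zero a ha q hqc m]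
    rw [mul_zero]
  have hgn : ∀ n : ℤ, n ≠ 0 → fourierCoeff gC n
      = fc a q (N + n) / (2 * Real.pi * Complex.I * n) := by
    intro n hn
    have hnC : (n : ℂ) ≠ 0 := Int.cast_ne_zero.mpr hn
    have hc2 : (2 * (Real.pi:ℂ) * Complex.I * (n:ℂ)) ≠ 0 :=
      mul_ne_zero (mul_ne_zero (mul_ne_zero two_ne_zero hπ) Complex.I_ne_zero) hnC
    rw [hcoeff_int n]
    rw [intervalIntegral.integral_congr (g := fun x => gR x * e2 a (-n) x)
      (fun x _ => mul_comm _ _)]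
    rw [show (∫ x in (0:ℝ)..a, gR x * e2 a (-n) x)
        = (a:ℂ) * fc a q (N + n) / (2*Real.pi*Complex.I*n) from
      S10.key_coeff a ha q hqc m hn]
    field_simp
  -- L² elements
  obtain ⟨C, hC⟩ := (isCompact_univ :
    IsCompact (Set.univ : Set (AddCircle a))).exists_bound_of_continuousOn hgCcont.continuousOn
  have hgmem : MeasureTheory.MemLp gC 2 AddCircle.haarAddCircle :=
    MeasureTheory.MemLp.of_bound hgCcont.aestronglyMeasurable C
      (MeasureTheory.ae_of_all _ fun z => hC z (Set.mem_univ z))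
  set uC : AddCircle a → ℂ := fun z => (starRingEnd ℂ) (gC z * fourier (2*N) z) with huC
  have huCcont : Continuous uC :=
    continuous_star.comp (hgCcont.mul (map_continuous (fourier (2*N))))
  obtain ⟨C2, hC2⟩ := (isCompact_univ :
    IsCompact (Set.univ : Set (AddCircle a))).exists_bound_of_continuousOn huCcont.continuousOn
  have humem : MeasureTheory.MemLp uC 2 AddCircle.haarAddCircle :=
    MeasureTheory.MemLp.of_bound huCcont.aestronglyMeasurable C2
      (MeasureTheory.ae_of_all _ fun z => hC2 z (Set.mem_univ z))
  set gLp := hgmem.toLp gC with hgLp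
  set uLp := humem.toLp uC with huLp
  have hreprg : ∀ i : ℤ, (fourierBasis (T := a)).repr gLp i = fourierCoeff gC i := by
    intro i
    rw [fourierBasis_repr]
    unfold fourierCoeff
    apply MeasureTheory.integral_congr_ae
    filter_upwards [hgmem.coeFn_toLp] with z hz
    rw [hz]
  have hrepru : ∀ i : ℤ, (fourierBasis (T := a)).repr uLp i = fourierCoeff uC i := by
    intro i
    rw [fourierBasis_repr]
    unfold fourierCoeff
    apply MeasureTheory.integral_congr_ae
    filter_upwards [humem.coeFn_toLp] with z hz
    rw [hz]
  have hconju : ∀ i : ℤ, (starRingEnd ℂ) (fourierCoeff uC i)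
      = fourierCoeff gC (-(2*N) - i) := by
    intro i
    unfold fourierCoeff
    rw [← integral_conj]
    apply MeasureTheory.integral_congr_ae
    apply MeasureTheory.ae_of_all
    intro z
    simp only [smul_eq_mul, huC, map_mul, Complex.conj_conj]
    rw [show -(-(2*N) - i) = i + 2*N from by ring, fourier_add]
    rw [show (starRingEnd ℂ) (fourier (-i) z) = fourier i z from by
      rw [fourier_neg, Complex.conj_conj]]
    ring
  -- Parseval
  have hPsum := (fourierBasis (T := a)).hasSum_inner_mul_inner uLp gLp
  have hPeq : ∀ i : ℤ,
      (inner ℂ uLp ((fourierBasis (T := a)) i) : ℂ)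
        * (inner ℂ ((fourierBasis (T := a)) i) gLp : ℂ)
      = fourierCoeff gC (-(2*N) - i) * fourierCoeff gC i := by
    intro i
    have h1 : (inner ℂ uLp ((fourierBasis (T := a)) i) : ℂ)
        = (starRingEnd ℂ) ((fourierBasis (T := a)).repr uLp i) := by
      rw [HilbertBasis.repr_apply_apply, inner_conj_symm]
    have h2 : (inner ℂ ((fourierBasis (T := a)) i) gLp : ℂ)
        = (fourierBasis (T := a)).repr gLp i :=
      (HilbertBasis.repr_apply_apply _ _ _).symm
    rw [h1, h2, hreprg, hrepru, hconju]
  have hPsum' : HasSum (fun i : ℤ => fourierCoeff gC (-(2*N) - i) * fourierCoeff gC i)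
      (inner ℂ uLp gLp : ℂ) := by
    have := hPsum
    rw [show (fun i : ℤ => (inner ℂ uLp ((fourierBasis (T := a)) i) : ℂ)
        * (inner ℂ ((fourierBasis (T := a)) i) gLp : ℂ))
      = (fun i : ℤ => fourierCoeff gC (-(2*N) - i) * fourierCoeff gC i) from
        funext hPeq] at this
    exact this
  -- value of the inner product
  have hval : (inner ℂ uLp gLp : ℂ)
      = (1/(a:ℂ)) * ∫ x in (0:ℝ)..a, (Gp a q m x - Gp0 a q m)^2 * e2 a (4*(m:ℤ)+4) x := by
    rw [MeasureTheory.L2.inner_def]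
    have step1 : (∫ z, (inner ℂ (uLp z) (gLp z) : ℂ) ∂AddCircle.haarAddCircle)
        = ∫ z, gC z * fourier (2*N) z * gC z ∂AddCircle.haarAddCircle := by
      apply MeasureTheory.integral_congr_ae
      filter_upwards [hgmem.coeFn_toLp, humem.coeFn_toLp] with z hz1 hz2
      rw [RCLike.inner_apply, hz1, hz2]
      simp only [huC, Complex.conj_conj]
      ring
    rw [step1, hconv]
    congr 1
    rw [intervalIntegral.integral_of_le ha.le, intervalIntegral.integral_of_le ha.le,
      MeasureTheory.integral_Ioc_eq_integral_Ioo, MeasureTheory.integral_Ioc_eq_integral_Ioo]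
    apply MeasureTheory.setIntegral_congr_fun measurableSet_Ioo
    intro x hx
    beta_reduce
    rw [hgClift x ⟨le_of_lt hx.1, hx.2⟩]
    rw [show (fourier (2*N) (↑x : AddCircle a) : ℂ) = e2 a (4*(m:ℤ)+4) x from by
      rw [fourier_coe_apply, S10.e2_eq]
      congr 1
      rw [hN]
      push_cast
      ring]
    simp only [hgR]
    ring
  -- the series
  set h : ℤ → ℂ := fun k =>
    fc a q k * fc a q (-k) / (((N - k : ℤ) : ℂ) * ((N + k : ℤ) : ℂ)) with hh
  have hclaim : ∀ i : ℤ, h (N + i)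
      = (-4*(Real.pi:ℂ)^2) * (fourierCoeff gC (-(2*N) - i) * fourierCoeff gC i) := by
    intro i
    by_cases hi : i = 0
    · subst hi
      rw [hg0, mul_zero, mul_zero]
      simp only [hh]
      rw [show N + 0 = N from by ring, show (N - N : ℤ) = 0 from by ring]
      norm_num
    by_cases hi2 : i = -(2*N)
    · subst hi2
      rw [show (-(2*N) - -(2*N) : ℤ) = 0 from by ring, hg0, zero_mul, mul_zero]
      simp only [hh]
      rw [show N + -(2*N) = -N from by ring, show (N + -N : ℤ) = 0 from by ring]
      norm_num
    · have hi3 : -(2*N) - i ≠ 0 := by omega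
      have hiC : (i:ℂ) ≠ 0 := Int.cast_ne_zero.mpr hi
      have h2NiC : (2*(N:ℂ) + i) ≠ 0 := by
        have h' : ((2*N + i : ℤ) : ℂ) ≠ 0 := Int.cast_ne_zero.mpr (by omega)
        push_cast at h'
        exact h'
      rw [hgn i hi, hgn _ hi3]
      rw [show N + (-(2*N) - i) = -(N + i) from by ring]
      simp only [hh]
      have d1 : ((N - (N+i) : ℤ) : ℂ) = -(i:ℂ) := by push_cast; ring
      have d2 : ((N + (N+i) : ℤ) : ℂ) = 2*(N:ℂ) + i := by push_cast; ring
      rw [d1, d2]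
      rw [div_mul_div_comm]
      have hden : (2*(Real.pi:ℂ)*Complex.I*((-(2*N) - i : ℤ):ℂ))
          * (2*(Real.pi:ℂ)*Complex.I*(i:ℂ))
          = (-4*(Real.pi:ℂ)^2) * (((-(2*N) - i : ℤ):ℂ) * i) := by
        have hIsq : (Complex.I)^2 = -1 := Complex.I_sq
        linear_combination (4*(Real.pi:ℂ)^2 * ((-(2*N) - i : ℤ):ℂ) * (i:ℂ)) * hIsq
      rw [hden]
      have hm4 : (-4*(Real.pi:ℂ)^2) ≠ 0 :=
        mul_ne_zero (by norm_num) (pow_ne_zero 2 hπ)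
      rw [show ((-(2*N) - i : ℤ):ℂ) * (i:ℂ) = -(i:ℂ) * (2*(N:ℂ) + (i:ℂ)) from by
        push_cast; ring]
      rw [← mul_div_assoc, mul_div_mul_left _ _ hm4,
        mul_comm (fc a q (-(N+i))) (fc a q (N+i))]
  have hPsum2 := hPsum'.mul_left (-4*(Real.pi:ℂ)^2)
  have hPsum3 : HasSum (fun i : ℤ => h (N + i))
      ((-4*(Real.pi:ℂ)^2) * (inner ℂ uLp gLp : ℂ)) := by
    rw [show (fun i : ℤ => h (N + i))
      = (fun i : ℤ => (-4*(Real.pi:ℂ)^2)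
          * (fourierCoeff gC (-(2*N) - i) * fourierCoeff gC i)) from funext hclaim]
    exact hPsum2
  have hPsum4 : HasSum h ((-4*(Real.pi:ℂ)^2) * (inner ℂ uLp gLp : ℂ)) :=
    ((Equiv.addLeft N).hasSum_iff).mp hPsum3
  have hhN : h N = 0 := by
    simp only [hh]
    rw [show (N - N : ℤ) = 0 from by ring]
    norm_num
  have hhNm : h (-N) = 0 := by
    simp only [hh]
    rw [show (N + -N : ℤ) = 0 from by ring]
    norm_num
  have hsupp : Function.support h ⊆ {k : ℤ | k ≠ N ∧ k ≠ -N} := by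
    intro k hk
    simp only [Set.mem_setOf_eq]
    constructor
    · rintro rfl; exact hk hhN
    · rintro rfl; exact hk hhNm
  constructor
  · -- summability
    have s1 : Summable (fun i : ℤ => ‖fourierCoeff gC i‖^2) := by
      have h1 := lp.memℓp ((fourierBasis (T := a)).repr gLp)
      have h2 := h1.summable (by norm_num : 0 < (2:ENNReal).toReal)
      have h3 : ∀ i : ℤ, ‖(fourierBasis (T := a)).repr gLp i‖ ^ (2:ENNReal).toReal
          = ‖fourierCoeff gC i‖^2 := by
        intro i
        rw [hreprg i, show (2:ENNReal).toReal = ((2:ℕ):ℝ) from by norm_num,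
          Real.rpow_natCast]
      rw [show (fun i : ℤ => ‖(fourierBasis (T := a)).repr gLp i‖ ^ (2:ENNReal).toReal)
        = (fun i : ℤ => ‖fourierCoeff gC i‖^2) from funext h3] at h2
      exact h2
    have s2 : Summable (fun i : ℤ => ‖fourierCoeff gC (-(2*N) - i)‖^2) :=
      ((Equiv.subLeft (-(2*N))).summable_iff
        (f := fun i : ℤ => ‖fourierCoeff gC i‖^2)).mpr s1
    have sP : Summable (fun i : ℤ => ‖fourierCoeff gC (-(2*N) - i) * fourierCoeff gC i‖) := by
      apply Summable.of_nonneg_of_le (fun i => norm_nonneg _) (fun i => ?_)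
        ((s2.add s1).div_const 2)
      rw [norm_mul]
      have hsq := sq_nonneg (‖fourierCoeff gC (-(2*N) - i)‖ - ‖fourierCoeff gC i‖)
      show ‖fourierCoeff gC (-(2*N) - i)‖ * ‖fourierCoeff gC i‖
        ≤ (‖fourierCoeff gC (-(2*N) - i)‖^2 + ‖fourierCoeff gC i‖^2) / 2
      nlinarith [norm_nonneg (fourierCoeff gC (-(2*N) - i)), norm_nonneg (fourierCoeff gC i)]
    have sh : Summable (fun i : ℤ => ‖h (N + i)‖) := by
      have e : ∀ i : ℤ, ‖h (N + i)‖
          = (4*Real.pi^2) * ‖fourierCoeff gC (-(2*N) - i) * fourierCoeff gC i‖ := by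
        intro i
        rw [hclaim i, norm_mul]
        congr 1
        rw [show (-4*(Real.pi:ℂ)^2) = ((-(4*Real.pi^2) : ℝ):ℂ) from by push_cast; ring]
        rw [Complex.norm_real, norm_neg, Real.norm_eq_abs, abs_of_nonneg (by positivity)]
      rw [show (fun i : ℤ => ‖h (N + i)‖)
        = (fun i : ℤ => (4*Real.pi^2)
            * ‖fourierCoeff gC (-(2*N) - i) * fourierCoeff gC i‖) from funext e]
      exact sP.mul_left _
    have shZ : Summable (fun k : ℤ => ‖h k‖) := ((Equiv.addLeft N).summable_iff).mp sh
    exact shZ.subtype _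
  · -- the equality
    have htsub : (∑' k : {k : ℤ | k ≠ N ∧ k ≠ -N}, h ↑k) = ∑' k : ℤ, h k :=
      tsum_subtype_eq_of_support_subset hsupp
    calc (∑' k : {k : ℤ // k ≠ N ∧ k ≠ -N},
          fc a q (k : ℤ) * fc a q (-(k : ℤ))
            / (((N - (k : ℤ) : ℤ) : ℂ) * ((N + (k : ℤ) : ℤ) : ℂ)))
        = ∑' k : ℤ, h k := htsub
      _ = (-4*(Real.pi:ℂ)^2) * (inner ℂ uLp gLp : ℂ) := hPsum4.tsum_eq
      _ = -(((4 * Real.pi^2 / a : ℝ)) : ℂ)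
            * ∫ x in (0:ℝ)..a, (Gp a q m x - Gp0 a q m)^2 * e2 a (4*(m:ℤ)+4) x := by
          rw [hval]
          push_cast
          ring
end

section
/- There exists a constant C > 0 (depending only on q and a) such that for every integer m ≥ 1, |∫₀^a (Q(x) − Q₀)² e^{−2(2m+2)π i x/a} dx| ≤ C ρ(m)/m. -/
open MeasureTheory Filter Set intervalIntegral

noncomputable section

def cE (a : ℝ) (n : ℤ) : ℂ := ((2 * Real.pi * (n:ℝ) / a : ℝ) : ℂ) * Complex.I

lemma e2_eq (a : ℝ) (n : ℤ) (x : ℝ) :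
    e2 a n x = Complex.exp (cE a n * x) := by
  unfold e2 cE
  congr 1
  push_cast
  ring

lemma cE_ne {a : ℝ} {n : ℤ} (ha : a ≠ 0) (hn : n ≠ 0) : cE a n ≠ 0 := by
  unfold cE
  apply mul_ne_zero _ Complex.I_ne_zero
  simp only [ne_eq, Complex.ofReal_eq_zero]
  exact div_ne_zero (mul_ne_zero (mul_ne_zero two_ne_zero Real.pi_ne_zero)
    (Int.cast_ne_zero.mpr hn)) ha

lemma norm_e2 (a : ℝ) (n : ℤ) (x : ℝ) : ‖e2 a n x‖ = 1 := by
  unfold e2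
  rw [Complex.norm_exp_ofReal_mul_I]

lemma e2_zero (a : ℝ) (n : ℤ) : e2 a n 0 = 1 := by
  rw [e2_eq]; simp

lemma e2_apply_a {a : ℝ} (ha : a ≠ 0) (n : ℤ) : e2 a n a = 1 := by
  unfold e2
  have h : (2 * Real.pi * (n:ℝ) * a / a : ℝ) = 2 * Real.pi * n := by field_simp
  rw [h, ← Complex.exp_int_mul_two_pi_mul_I n]
  congr 1
  push_cast
  ring

lemma integral_e2 {a : ℝ} {n : ℤ} (ha : a ≠ 0) (hn : n ≠ 0) (s t : ℝ) :
    ∫ x in s..t, e2 a n x = (e2 a n t - e2 a n s) / cE a n := by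
  simp_rw [e2_eq]
  exact integral_exp_mul_complex (cE_ne ha hn)

lemma norm_cE {a : ℝ} (ha : 0 < a) (n : ℤ) : ‖cE a n‖ = 2 * Real.pi * |(n:ℝ)| / a := by
  unfold cE
  rw [norm_mul, Complex.norm_I, mul_one, Complex.norm_real, Real.norm_eq_abs, abs_div,
    abs_of_pos ha, abs_mul, abs_mul, abs_of_pos Real.pi_pos]
  norm_num

lemma e2_cont (a : ℝ) (n : ℤ) : Continuous (fun x => e2 a n x) := by
  have h : (fun x => e2 a n x) = fun x : ℝ => Complex.exp (cE a n * x) :=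
    funext (e2_eq a n)
  rw [h]
  exact Complex.continuous_exp.comp (continuous_const.mul Complex.continuous_ofReal)

lemma fub {b : ℝ} (hb : 0 ≤ b) {f g : ℝ → ℂ}
    (hf : IntegrableOn f (Ioc 0 b)) (hg : IntegrableOn g (Ioc 0 b)) :
    ∫ x in (0:ℝ)..b, f x * ∫ t in (0:ℝ)..x, g t
      = ∫ t in (0:ℝ)..b, g t * ∫ x in t..b, f x := by
  have hK : Integrable (Function.uncurry fun x t =>
      if 0 < t ∧ t ≤ x then f x * g t else 0)
      ((volume.restrict (Ioc 0 b)).prod (volume.restrict (Ioc 0 b))) := by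
    have hfg : Integrable (fun p : ℝ × ℝ => f p.1 * g p.2)
        ((volume.restrict (Ioc 0 b)).prod (volume.restrict (Ioc 0 b))) :=
      Integrable.mul_prod hf hg
    have hs : MeasurableSet {p : ℝ × ℝ | 0 < p.2 ∧ p.2 ≤ p.1} := by
      apply MeasurableSet.inter
      · exact measurableSet_lt measurable_const measurable_snd
      · exact measurableSet_le measurable_snd measurable_fst
    refine (hfg.indicator hs).congr ?_
    filter_upwards with p
    simp [Function.uncurry, Set.indicator_apply, Set.mem_setOf_eq]
  have swap := MeasureTheory.integral_integral_swap hK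
  rw [intervalIntegral.integral_of_le hb, intervalIntegral.integral_of_le hb]
  have hL : ∫ x in Ioc 0 b, (f x * ∫ t in (0:ℝ)..x, g t) ∂volume
      = ∫ x in Ioc 0 b, ∫ t in Ioc 0 b, (if 0 < t ∧ t ≤ x then f x * g t else 0) ∂volume ∂volume := by
    refine setIntegral_congr_ae measurableSet_Ioc ?_
    filter_upwards with x hx
    have h1 : ∫ t in Ioc 0 b, (if 0 < t ∧ t ≤ x then f x * g t else 0) ∂volume
        = ∫ t in Ioc 0 b, (Ioc 0 x).indicator (fun t => f x * g t) t ∂volume := by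
      refine setIntegral_congr_ae measurableSet_Ioc ?_
      filter_upwards with t ht
      simp [Set.indicator_apply, Set.mem_Ioc]
    have hset : Ioc (0:ℝ) b ∩ Ioc 0 x = Ioc 0 x := by
      rw [Set.Ioc_inter_Ioc]
      simp [min_eq_right hx.2]
    rw [h1, MeasureTheory.setIntegral_indicator measurableSet_Ioc, hset,
      MeasureTheory.integral_const_mul, intervalIntegral.integral_of_le hx.1.le]
  have hR : ∫ t in Ioc 0 b, ∫ x in Ioc 0 b, (if 0 < t ∧ t ≤ x then f x * g t else 0) ∂volume ∂volume
      = ∫ t in Ioc 0 b, (g t * ∫ x in t..b, f x) ∂volume := by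
    refine setIntegral_congr_ae measurableSet_Ioc ?_
    filter_upwards with t ht
    have h1 : ∫ x in Ioc 0 b, (if 0 < t ∧ t ≤ x then f x * g t else 0) ∂volume
        = ∫ x in Ioc 0 b, (Icc t b).indicator (fun x => f x * g t) x ∂volume := by
      refine setIntegral_congr_ae measurableSet_Ioc ?_
      filter_upwards with x hx
      simp only [Set.indicator_apply, Set.mem_Icc]
      by_cases h : t ≤ x
      · simp [h, ht.1, hx.2]
      · simp [h]
    have hset : Ioc (0:ℝ) b ∩ Icc t b = Icc t b := by
      apply Set.inter_eq_self_of_subset_right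
      intro y hy
      exact ⟨lt_of_lt_of_le ht.1 hy.1, hy.2⟩
    rw [h1, MeasureTheory.setIntegral_indicator measurableSet_Icc, hset,
      MeasureTheory.integral_Icc_eq_integral_Ioc,
      intervalIntegral.integral_of_le ht.2]
    simp_rw [mul_comm (f _) (g t)]
    rw [MeasureTheory.integral_const_mul]
  rw [hL, swap, hR]

lemma arith_bound (a Q0r Nq ρ M : ℝ) (ha : 0 < a) (hNq0 : 0 ≤ Nq) (hρ0 : 0 ≤ ρ)
    (hM : 1 ≤ M) :
    2*|Q0r|/(a*(2*Real.pi*(2*M+2)/a))*ρ + 2/(a^2*(2*Real.pi*(2*M+2)/a))*(Nq*ρ)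
      ≤ ((|Q0r| + Nq/a)/Real.pi + 1) * ρ / M := by
  have hπ : (0:ℝ) < Real.pi := Real.pi_pos
  have hM0 : (0:ℝ) < M := lt_of_lt_of_le one_pos hM
  have habs : (0:ℝ) ≤ |Q0r| := abs_nonneg _
  have h1 : a*(2*Real.pi*(2*M+2)/a) = 2*Real.pi*(2*M+2) := by field_simp
  have h2 : a^2*(2*Real.pi*(2*M+2)/a) = a*(2*Real.pi*(2*M+2)) := by
    field_simp
  rw [h1, h2]
  have t1 : 2*|Q0r|/(2 * Real.pi * (2*M+2)) * ρ ≤ (|Q0r|/Real.pi) * ρ / M := by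
    rw [div_mul_eq_mul_div, div_le_div_iff₀ (by positivity) hM0]
    have e : (|Q0r|/Real.pi) * ρ * (2 * Real.pi * (2*M+2)) = |Q0r| * ρ * (2*(2*M+2)) := by
      field_simp
    rw [e]
    nlinarith [mul_nonneg habs hρ0, mul_nonneg (mul_nonneg habs hρ0) hM0.le]
  have t2 : 2/(a * (2 * Real.pi * (2*M+2))) * (Nq * ρ) ≤ (Nq/a/Real.pi) * ρ / M := by
    rw [div_mul_eq_mul_div, div_le_div_iff₀ (by positivity) hM0]
    have e : (Nq/a/Real.pi) * ρ * (a * (2 * Real.pi * (2*M+2))) = Nq * ρ * (2*(2*M+2)) := by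
      field_simp
    rw [e]
    nlinarith [mul_nonneg hNq0 hρ0, mul_nonneg (mul_nonneg hNq0 hρ0) hM0.le]
  refine le_trans (add_le_add t1 t2) ?_
  have e4 : (|Q0r|/Real.pi) * ρ / M + (Nq/a/Real.pi) * ρ / M
      = ((|Q0r| + Nq/a)/Real.pi) * ρ / M := by
    field_simp
  rw [e4]
  gcongr
  linarith

end

/-- there is `C > 0` such that for every `m ≥ 1`,
`|∫₀^a (Q(x)−Q₀)² e^{−2(2m+2)π i x/a} dx| ≤ C ρ(m)/m`. -/
theorem statement11 (a : ℝ) (ha : 0 < a) (q : ℝ → ℝ)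
    (hq : MeasureTheory.IntegrableOn q (Set.Icc 0 a))
    (hper : ∀ x, q (x + a) = q x)
    (hc0 : fc a q 0 = 0) :
    ∃ C > (0:ℝ), ∀ m : ℕ, 1 ≤ m →
      ‖∫ x in (0:ℝ)..a, (((Qf a q x - Q0 a q : ℝ)) : ℂ)^2 * e2 a (-(2*(m:ℤ)+2)) x‖
        ≤ C * rho a q m / (m : ℝ) := by
  have ha0 : a ≠ 0 := ne_of_gt ha
  have hπ : (0:ℝ) < Real.pi := Real.pi_pos
  have huIcc : uIcc (0:ℝ) a = Icc 0 a := uIcc_of_le ha.le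
  -- basic integrability
  have hqc : IntegrableOn (fun t => (q t : ℂ)) (Icc 0 a) := hq.ofReal
  have hqii : IntervalIntegrable (fun t => (q t : ℂ)) volume 0 a :=
    (intervalIntegrable_iff_integrableOn_Icc_of_le ha.le).mpr hqc
  have hqiir : IntervalIntegrable q volume 0 a :=
    (intervalIntegrable_iff_integrableOn_Icc_of_le ha.le).mpr hq
  -- V
  set V : ℝ → ℂ := fun x => ∫ t in (0:ℝ)..x, (q t : ℂ) with hVdef
  have hVcont : ContinuousOn V (Icc 0 a) := by
    rw [← huIcc]
    exact intervalIntegral.continuousOn_primitive_interval (by rwa [huIcc])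
  -- ∫ q = 0
  have hint_q : (∫ t in (0:ℝ)..a, (q t : ℂ)) = 0 := by
    have h1 : fc a q 0 = (1/(a:ℂ)) * ∫ x in (0:ℝ)..a, (q x : ℂ) := by
      unfold fc
      congr 1
      apply intervalIntegral.integral_congr
      intro x _
      have h2 : e2 a (-(0:ℤ)) x = 1 := by
        rw [neg_zero, e2_eq]
        unfold cE
        push_cast
        simp
      simp only [h2, mul_one]
    rw [h1, mul_eq_zero] at hc0
    rcases hc0 with h | h
    · exfalso
      simp only [one_div, inv_eq_zero, Complex.ofReal_eq_zero] at h
      exact ha0 h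
    · exact h
  have hVa : V a = 0 := hint_q
  -- Qf as complex
  have hQf : ∀ x : ℝ, ((Qf a q x : ℝ) : ℂ) = (1/(a:ℂ)) * V x := by
    intro x
    simp only [Qf, hVdef, Complex.ofReal_mul, Complex.ofReal_div, Complex.ofReal_one,
      ← intervalIntegral.integral_ofReal]
  -- the constant
  set Nq : ℝ := ∫ x in (0:ℝ)..a, ‖q x‖ with hNqdef
  have hNq0 : 0 ≤ Nq := intervalIntegral.integral_nonneg ha.le (fun x _ => norm_nonneg _)
  set Q0r : ℝ := Q0 a q with hQ0def
  refine ⟨(|Q0r| + Nq/a)/Real.pi + 1, by positivity, ?_⟩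
  intro m hm
  have hm0 : (0:ℝ) < m := by exact_mod_cast hm
  set n : ℤ := -(2*(m:ℤ)+2) with hndef
  have hn : n ≠ 0 := by omega
  set E : ℝ → ℂ := fun x => e2 a n x with hEdef
  have hEcont : Continuous E := e2_cont a n
  have hEa1 : E a = 1 := e2_apply_a ha0 n
  have hEii : IntervalIntegrable E volume 0 a := hEcont.intervalIntegrable 0 a
  set c : ℂ := cE a n with hcdef
  have hc : c ≠ 0 := cE_ne ha0 hn
  -- R
  set R : ℝ → ℂ := fun x => ∫ t in (0:ℝ)..x, (q t : ℂ) * E t with hRdef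
  have hqE : IntervalIntegrable (fun t => (q t : ℂ) * E t) volume 0 a :=
    hqii.mul_continuousOn hEcont.continuousOn
  have hRcont : ContinuousOn R (Icc 0 a) := by
    rw [← huIcc]
    refine intervalIntegral.continuousOn_primitive_interval ?_
    rw [huIcc]
    exact (intervalIntegrable_iff_integrableOn_Icc_of_le ha.le).mp hqE
  -- rho bound
  have hρ : ∀ x ∈ Icc (0:ℝ) a, ‖R x‖ ≤ rho a q m := by
    intro x hx
    have hbdd : BddAbove (Set.range fun y : Icc (0:ℝ) a => ‖R (y:ℝ)‖) := by
      have h2 := (isCompact_Icc.image_of_continuousOn hRcont.norm).bddAbove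
      have h3 : (fun y : Icc (0:ℝ) a => ‖R (y:ℝ)‖)
          = (fun y : ℝ => ‖R y‖) ∘ (Subtype.val) := rfl
      rw [h3, Set.range_comp, Subtype.range_coe]
      exact h2
    have h4 : ‖R x‖ ≤ ⨆ y : Icc (0:ℝ) a, ‖R (y:ℝ)‖ := le_ciSup hbdd ⟨x, hx⟩
    refine le_trans h4 ?_
    unfold rho
    exact le_max_left _ _
  have hρ0 : 0 ≤ rho a q m := by
    refine le_trans (Real.iSup_nonneg (fun _ => norm_nonneg _)) (le_max_left _ _)
  -- step: ∫ E = 0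
  have hEint0 : ∫ x in (0:ℝ)..a, E x = 0 := by
    rw [hEdef]
    rw [integral_e2 ha0 hn, e2_apply_a ha0, e2_zero]
    simp
  -- step: ∫ E V
  have hIoc : ∀ {f : ℝ → ℂ}, IntervalIntegrable f volume 0 a → IntegrableOn f (Ioc 0 a) := by
    intro f hf
    exact (intervalIntegrable_iff_integrableOn_Ioc_of_le ha.le).mp hf
  have hVE : ∫ x in (0:ℝ)..a, E x * V x = - R a / c := by
    rw [hVdef]
    rw [fub ha.le (hIoc hEii) (hIoc hqii)]
    have h1 : ∀ t ∈ uIcc (0:ℝ) a,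
        (q t : ℂ) * ∫ x in t..a, E x = (1/c) * ((q t : ℂ) - (q t : ℂ) * E t) := by
      intro t _
      rw [hEdef]
      rw [integral_e2 ha0 hn, e2_apply_a ha0, ← hcdef, ← hEdef]
      rw [div_eq_mul_inv]
      field_simp
      ring
    have hRa : (∫ t in (0:ℝ)..a, (q t : ℂ) * E t) = R a := rfl
    rw [intervalIntegral.integral_congr h1, intervalIntegral.integral_const_mul,
      intervalIntegral.integral_sub hqii hqE, hint_q, hRa]
    field_simp
    ring
  -- step: V x ^ 2 as integral
  have hsq : ∀ x ∈ Icc (0:ℝ) a, V x * V x = 2 * ∫ t in (0:ℝ)..x, (q t : ℂ) * V t := by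
    intro x hx
    have hsub : uIcc (0:ℝ) x ⊆ uIcc (0:ℝ) a := by
      rw [huIcc, uIcc_of_le hx.1]
      exact Icc_subset_Icc le_rfl hx.2
    have hqx : IntervalIntegrable (fun t => (q t : ℂ)) volume 0 x := hqii.mono_set hsub
    have hqVx : IntervalIntegrable (fun t => (q t : ℂ) * V t) volume 0 x := by
      refine hqx.mul_continuousOn ?_
      refine hVcont.mono ?_
      rw [uIcc_of_le hx.1]
      exact Icc_subset_Icc le_rfl hx.2
    have h := fub hx.1 (hIoc hqii |>.mono_set (Ioc_subset_Ioc le_rfl hx.2))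
      (hIoc hqii |>.mono_set (Ioc_subset_Ioc le_rfl hx.2))
    have h2 : ∀ t ∈ uIcc (0:ℝ) x,
        (q t : ℂ) * ∫ y in t..x, (q y : ℂ) = (q t : ℂ) * V x - (q t : ℂ) * V t := by
      intro t ht
      rw [uIcc_of_le hx.1] at ht
      have hqt : IntervalIntegrable (fun y => (q y : ℂ)) volume 0 t := by
        refine hqii.mono_set ?_
        rw [huIcc, uIcc_of_le ht.1]
        exact Icc_subset_Icc le_rfl (le_trans ht.2 hx.2)
      have e1 : (∫ y in (0:ℝ)..x, (q y : ℂ)) = V x := rfl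
      have e2 : (∫ y in (0:ℝ)..t, (q y : ℂ)) = V t := rfl
      rw [← intervalIntegral.integral_interval_sub_left hqx hqt, e1, e2]
      ring
    rw [intervalIntegral.integral_congr h2] at h
    rw [intervalIntegral.integral_sub (hqx.mul_const _) hqVx] at h
    rw [intervalIntegral.integral_mul_const] at h
    have h3 : (∫ t in (0:ℝ)..x, (q t : ℂ)) = V x := rfl
    rw [h3] at h
    linear_combination -h
  -- step: ∫ q V = 0
  have hqV0 : ∫ t in (0:ℝ)..a, (q t : ℂ) * V t = 0 := by
    have h := hsq a ⟨ha.le, le_rfl⟩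
    rw [hVa] at h
    simp only [mul_zero, zero_mul] at h
    have := h.symm
    rcases mul_eq_zero.mp this with h' | h'
    · exact absurd h' two_ne_zero
    · exact h'
  -- step: ∫ q V E = -∫ q R
  have hqV : IntervalIntegrable (fun t => (q t : ℂ) * V t) volume 0 a := by
    refine hqii.mul_continuousOn ?_
    rwa [huIcc]
  have hqVE_ii : IntervalIntegrable (fun t => (q t : ℂ) * V t * E t) volume 0 a :=
    hqV.mul_continuousOn hEcont.continuousOn
  have hqR : IntervalIntegrable (fun t => (q t : ℂ) * R t) volume 0 a := by
    refine hqii.mul_continuousOn ?_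
    rwa [huIcc]
  have hqVE : ∫ t in (0:ℝ)..a, (q t : ℂ) * V t * E t = - ∫ t in (0:ℝ)..a, (q t : ℂ) * R t := by
    have h0 : ∀ t ∈ uIcc (0:ℝ) a, (q t : ℂ) * V t * E t = ((q t : ℂ) * E t) * V t := by
      intro t _; ring
    rw [intervalIntegral.integral_congr h0]
    rw [hVdef]
    rw [fub ha.le (hIoc hqE) (hIoc hqii)]
    have h1 : ∀ t ∈ uIcc (0:ℝ) a,
        (q t : ℂ) * ∫ x in t..a, (q x : ℂ) * E x
          = (q t : ℂ) * R a - (q t : ℂ) * R t := by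
      intro t ht
      rw [huIcc] at ht
      have hqEt : IntervalIntegrable (fun y => (q y : ℂ) * E y) volume 0 t := by
        refine hqE.mono_set ?_
        rw [huIcc, uIcc_of_le ht.1]
        exact Icc_subset_Icc le_rfl ht.2
      have e1 : (∫ x in (0:ℝ)..a, (q x : ℂ) * E x) = R a := rfl
      have e2 : (∫ x in (0:ℝ)..t, (q x : ℂ) * E x) = R t := rfl
      rw [← intervalIntegral.integral_interval_sub_left hqE hqEt, e1, e2]
      ring
    rw [intervalIntegral.integral_congr h1,
      intervalIntegral.integral_sub (hqii.mul_const _) hqR,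
      intervalIntegral.integral_mul_const, hint_q]
    ring
  -- step: ∫ V V E
  have hV2E : ∫ x in (0:ℝ)..a, V x * V x * E x
      = (2/c) * ∫ t in (0:ℝ)..a, (q t : ℂ) * R t := by
    have h0 : ∀ x ∈ uIcc (0:ℝ) a,
        V x * V x * E x = 2 * (E x * ∫ t in (0:ℝ)..x, (q t : ℂ) * V t) := by
      intro x hx
      rw [huIcc] at hx
      rw [hsq x hx]
      ring
    rw [intervalIntegral.integral_congr h0, intervalIntegral.integral_const_mul]
    rw [fub ha.le (hIoc hEii) (hIoc hqV)]
    have h1 : ∀ t ∈ uIcc (0:ℝ) a,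
        ((q t : ℂ) * V t) * ∫ x in t..a, E x
          = (1/c) * ((q t : ℂ) * V t - (q t : ℂ) * V t * E t) := by
      intro t _
      rw [hEdef, integral_e2 ha0 hn, e2_apply_a ha0, ← hcdef, ← hEdef]
      field_simp
      ring
    rw [intervalIntegral.integral_congr h1, intervalIntegral.integral_const_mul,
      intervalIntegral.integral_sub hqV hqVE_ii, hqV0, hqVE]
    field_simp
    ring
  -- integrability for the expansion
  have hVE_ii : IntervalIntegrable (fun x => E x * V x) volume 0 a := by
    apply ContinuousOn.intervalIntegrable
    rw [huIcc]
    exact hEcont.continuousOn.mul hVcont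
  have hVVE_ii : IntervalIntegrable (fun x => V x * V x * E x) volume 0 a := by
    apply ContinuousOn.intervalIntegrable
    rw [huIcc]
    exact (hVcont.mul hVcont).mul hEcont.continuousOn
  -- main expansion
  have hexp : ∀ x ∈ uIcc (0:ℝ) a,
      (((Qf a q x - Q0 a q : ℝ)) : ℂ)^2 * e2 a (-(2*(m:ℤ)+2)) x
        = ((Q0r:ℂ)^2) * E x + (-(2*(Q0r:ℂ))/a) * (E x * V x)
          + (1/(a:ℂ)^2) * (V x * V x * E x) := by
    intro x _
    have h1 : (((Qf a q x - Q0 a q : ℝ)) : ℂ) = (1/(a:ℂ)) * V x - (Q0r:ℂ) := by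
      rw [Complex.ofReal_sub, hQf x, hQ0def]
    have h2 : e2 a (-(2*(m:ℤ)+2)) x = E x := by rw [hEdef, hndef]
    rw [h1, h2]
    have ha0c : (a:ℂ) ≠ 0 := by exact_mod_cast ha0
    field_simp
    ring
  rw [intervalIntegral.integral_congr hexp]
  rw [intervalIntegral.integral_add (((hEii.const_mul _).add (hVE_ii.const_mul _)))
      (hVVE_ii.const_mul _),
    intervalIntegral.integral_add (hEii.const_mul _) (hVE_ii.const_mul _),
    intervalIntegral.integral_const_mul, intervalIntegral.integral_const_mul,
    intervalIntegral.integral_const_mul, hEint0, hVE, hV2E]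
  -- now bound the norm
  have hnabs : |((n:ℤ):ℝ)| = 2*(m:ℝ)+2 := by
    rw [hndef]
    push_cast
    rw [abs_neg, abs_of_nonneg (by positivity)]
  have hnormc : ‖c‖ = 2 * Real.pi * (2*(m:ℝ)+2) / a := by
    rw [hcdef, norm_cE ha n, hnabs]
  have hωpos : (0:ℝ) < 2 * Real.pi * (2*(m:ℝ)+2) / a := by positivity
  have hcpos : (0:ℝ) < ‖c‖ := by rw [hnormc]; exact hωpos
  -- simplify the expression
  have hsimp : (Q0r:ℂ)^2 * 0 + (-(2*(Q0r:ℂ))/(a:ℂ)) * (-R a / c)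
      + (1/(a:ℂ)^2) * ((2/c) * ∫ t in (0:ℝ)..a, (q t : ℂ) * R t)
      = (2*(Q0r:ℂ)/((a:ℂ)*c)) * R a
        + (2/((a:ℂ)^2*c)) * ∫ t in (0:ℝ)..a, (q t : ℂ) * R t := by
    have ha0c : (a:ℂ) ≠ 0 := by exact_mod_cast ha0
    field_simp
    ring
  rw [hsimp]
  -- norm bound for ∫ q R
  have hIntqR : ‖∫ t in (0:ℝ)..a, (q t : ℂ) * R t‖ ≤ Nq * rho a q m := by
    calc ‖∫ t in (0:ℝ)..a, (q t : ℂ) * R t‖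
        ≤ ∫ t in (0:ℝ)..a, ‖(q t : ℂ) * R t‖ :=
          intervalIntegral.norm_integral_le_integral_norm ha.le
      _ ≤ ∫ t in (0:ℝ)..a, ‖q t‖ * rho a q m := by
          refine intervalIntegral.integral_mono_on ha.le hqR.norm
            ((hqiir.norm).mul_const _) ?_
          intro t ht
          rw [norm_mul, Complex.norm_real]
          exact mul_le_mul_of_nonneg_left (hρ t ht) (norm_nonneg _)
      _ = Nq * rho a q m := by rw [intervalIntegral.integral_mul_const]
  have hRa_bound : ‖R a‖ ≤ rho a q m := hρ a ⟨ha.le, le_rfl⟩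
  have habs : (0:ℝ) ≤ |Q0r| := abs_nonneg _
  -- norms of the coefficients
  have e2a : ‖(a:ℂ)‖ = a := by
    rw [Complex.norm_real, Real.norm_eq_abs, abs_of_pos ha]
  have hn1 : ‖(2*(Q0r:ℂ)/((a:ℂ)*c)) * R a‖ ≤ 2*|Q0r|/(a*‖c‖) * rho a q m := by
    have hXnorm : ‖2*(Q0r:ℂ)/((a:ℂ)*c)‖ = 2*|Q0r|/(a*‖c‖) := by
      rw [norm_div, norm_mul, norm_mul, e2a, Complex.norm_real, Real.norm_eq_abs]
      norm_num
    rw [norm_mul, hXnorm]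
    exact mul_le_mul_of_nonneg_left hRa_bound (by positivity)
  have hn2 : ‖(2/((a:ℂ)^2*c)) * ∫ t in (0:ℝ)..a, (q t : ℂ) * R t‖
      ≤ 2/(a^2*‖c‖) * (Nq * rho a q m) := by
    have hXnorm : ‖2/((a:ℂ)^2*c)‖ = 2/(a^2*‖c‖) := by
      rw [norm_div, norm_mul, norm_pow, e2a]
      norm_num
    rw [norm_mul, hXnorm]
    exact mul_le_mul_of_nonneg_left hIntqR (by positivity)
  refine le_trans (norm_add_le _ _) (le_trans (add_le_add hn1 hn2) ?_)
  rw [hnormc]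
  have hm1 : (1:ℝ) ≤ (m:ℝ) := by exact_mod_cast hm
  exact arith_bound a Q0r Nq (rho a q m) (m:ℝ) ha hNq0 hρ0 hm1
end

section
/- There exists a constant C > 0 (depending only on q and a) such that for every integer m ≥ 1, |∫₀^a (Q(x) − Q₀)² q(x) e^{−2(2m+2)π i x/a} dx| ≤ C ρ(m). -/
open MeasureTheory Filter Set intervalIntegral

lemma swap_tri {b : ℝ} (hb : 0 ≤ b) {f g : ℝ → ℂ}
    (hf : IntegrableOn f (Ioc 0 b)) (hg : IntegrableOn g (Ioc 0 b)) :
    ∫ x in Ioc (0:ℝ) b, f x * ∫ t in Ioc (0:ℝ) x, g t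
      = ∫ t in Ioc (0:ℝ) b, g t * ∫ x in Ioc t b, f x := by
  set μ := volume.restrict (Ioc (0:ℝ) b) with hμ
  set s : Set (ℝ × ℝ) := {p : ℝ × ℝ | p.2 ≤ p.1} with hs
  have hsm : MeasurableSet s := measurableSet_le measurable_snd measurable_fst
  set F : ℝ → ℝ → ℂ := fun x t => s.indicator (fun p => f p.1 * g p.2) (x, t) with hF
  have hFint : Integrable (Function.uncurry F) (μ.prod μ) := by
    have h1 : Integrable (fun p : ℝ × ℝ => f p.1 * g p.2) (μ.prod μ) :=
      Integrable.mul_prod hf hg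
    have h2 := h1.indicator hsm
    exact h2
  have key := integral_integral_swap hFint
  have hL : (∫ x, (∫ t, F x t ∂μ) ∂μ) = ∫ x in Ioc (0:ℝ) b, f x * ∫ t in Ioc (0:ℝ) x, g t := by
    rw [hμ]
    apply setIntegral_congr_fun measurableSet_Ioc
    intro x hx
    show (∫ t in Ioc (0:ℝ) b, F x t) = f x * ∫ t in Ioc (0:ℝ) x, g t
    have h3 : (fun t => F x t) = (Iic x).indicator (fun t => f x * g t) := by
      funext t
      by_cases h : t ≤ x <;>
        simp [hF, hs, Set.indicator_apply, h]
    rw [show (fun t => F x t) = (Iic x).indicator (fun t => f x * g t) from h3, MeasureTheory.integral_indicator measurableSet_Iic,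
      Measure.restrict_restrict measurableSet_Iic]
    have h4 : Iic x ∩ Ioc 0 b = Ioc 0 x := by
      ext t
      simp only [mem_inter_iff, mem_Iic, mem_Ioc]
      constructor
      · rintro ⟨h1, h2, h3⟩; exact ⟨h2, h1⟩
      · rintro ⟨h1, h2⟩; exact ⟨h2, h1, h2.trans hx.2⟩
    rw [h4, MeasureTheory.integral_const_mul]
  have hR : (∫ t, (∫ x, F x t ∂μ) ∂μ) = ∫ t in Ioc (0:ℝ) b, g t * ∫ x in Ioc t b, f x := by
    rw [hμ]
    apply setIntegral_congr_fun measurableSet_Ioc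
    intro t ht
    show (∫ x in Ioc (0:ℝ) b, F x t) = g t * ∫ x in Ioc t b, f x
    have h3 : (fun x => F x t) = (Ici t).indicator (fun x => f x * g t) := by
      funext x
      by_cases h : t ≤ x <;>
        simp [hF, hs, Set.indicator_apply, h]
    rw [show (fun x => F x t) = (Ici t).indicator (fun x => f x * g t) from h3, MeasureTheory.integral_indicator measurableSet_Ici,
      Measure.restrict_restrict measurableSet_Ici]
    have h4 : Ici t ∩ Ioc 0 b = Icc t b := by
      ext x
      simp only [mem_inter_iff, mem_Ici, mem_Ioc, mem_Icc]
      constructor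
      · rintro ⟨h1, h2, h3⟩; exact ⟨h1, h3⟩
      · rintro ⟨h1, h2⟩; exact ⟨h1, ht.1.trans_le h1, h2⟩
    rw [h4, integral_Icc_eq_integral_Ioc, MeasureTheory.integral_mul_const, mul_comm]
  rw [← hL, ← hR, key]

lemma swap_tri' {b : ℝ} (hb : 0 ≤ b) {f g : ℝ → ℂ}
    (hf : IntegrableOn f (Icc 0 b)) (hg : IntegrableOn g (Icc 0 b)) :
    ∫ x in (0:ℝ)..b, f x * ∫ t in (0:ℝ)..x, g t
      = ∫ t in (0:ℝ)..b, g t * ∫ x in t..b, f x := by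
  rw [integral_of_le hb, integral_of_le hb]
  have h1 : ∫ x in Ioc (0:ℝ) b, f x * ∫ t in (0:ℝ)..x, g t
      = ∫ x in Ioc (0:ℝ) b, f x * ∫ t in Ioc (0:ℝ) x, g t := by
    apply setIntegral_congr_fun measurableSet_Ioc
    intro x hx
    simp only [integral_of_le hx.1.le]
  have h2 : ∫ t in Ioc (0:ℝ) b, g t * ∫ x in t..b, f x
      = ∫ t in Ioc (0:ℝ) b, g t * ∫ x in Ioc t b, f x := by
    apply setIntegral_congr_fun measurableSet_Ioc
    intro t ht
    simp only [integral_of_le ht.2]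
  rw [h1, h2]
  exact swap_tri hb (hf.mono_set Ioc_subset_Icc_self) (hg.mono_set Ioc_subset_Icc_self)

lemma sq_primitive {b : ℝ} (hb : 0 ≤ b) {w : ℝ → ℂ} (hw : IntegrableOn w (Icc 0 b)) :
    (∫ t in (0:ℝ)..b, w t) ^ 2 = 2 * ∫ t in (0:ℝ)..b, w t * ∫ s in (0:ℝ)..t, w s := by
  set S : ℝ → ℂ := fun t => ∫ s in (0:ℝ)..t, w s with hS
  have hwu : IntegrableOn w (uIcc 0 b) := by rwa [uIcc_of_le hb]
  have hwi : IntervalIntegrable w volume 0 b := hwu.intervalIntegrable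
  have hScont : ContinuousOn S (Icc 0 b) := by
    rw [← uIcc_of_le hb]; exact continuousOn_primitive_interval hwu
  obtain ⟨M, hM⟩ := isCompact_Icc.exists_bound_of_continuousOn hScont
  have hSaesm : AEStronglyMeasurable S (volume.restrict (Icc 0 b)) :=
    hScont.aestronglyMeasurable measurableSet_Icc
  have hwS : IntegrableOn (fun t => w t * S t) (Icc 0 b) := by
    have h := Integrable.bdd_mul (c := M) hw hSaesm
      ((ae_restrict_iff' measurableSet_Icc).2 (Filter.Eventually.of_forall hM))
    exact IntegrableOn.congr_fun h (fun t _ => mul_comm _ _) measurableSet_Icc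
  have hwSi : IntervalIntegrable (fun t => w t * S t) volume 0 b := by
    apply IntegrableOn.intervalIntegrable; rwa [uIcc_of_le hb]
  have key := swap_tri' hb hw hw
  have h2 : ∫ t in (0:ℝ)..b, w t * ∫ x in t..b, w x
      = ∫ t in (0:ℝ)..b, (w t * S b - w t * S t) := by
    apply intervalIntegral.integral_congr
    intro t ht
    rw [uIcc_of_le hb] at ht
    have hwt : IntervalIntegrable w volume 0 t := hwi.mono_set
      (by rw [uIcc_of_le hb, uIcc_of_le ht.1]; exact Icc_subset_Icc le_rfl ht.2)
    have h5 := integral_interval_sub_left hwi hwt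
    show w t * ∫ x in t..b, w x = w t * S b - w t * S t
    rw [← h5]; ring
  have h3 : ∫ t in (0:ℝ)..b, (w t * S b - w t * S t)
      = (∫ t in (0:ℝ)..b, w t) * S b - ∫ t in (0:ℝ)..b, w t * S t := by
    rw [intervalIntegral.integral_sub (hwi.mul_const _) hwSi,
      intervalIntegral.integral_mul_const]
  have E : ∫ t in (0:ℝ)..b, w t * S t
      = (∫ t in (0:ℝ)..b, w t) * S b - ∫ t in (0:ℝ)..b, w t * S t := by
    rw [← h3, ← h2]; exact key
  have hSb : S b = ∫ t in (0:ℝ)..b, w t := rfl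
  rw [← hSb] at E ⊢
  linear_combination -E

lemma main_bound (a : ℝ) (ha : 0 < a) (q : ℝ → ℝ)
    (hq : MeasureTheory.IntegrableOn q (Set.Icc 0 a))
    (E : ℝ → ℂ)
    (hqE : IntegrableOn (fun t => ((q t : ℝ) : ℂ) * E t) (Icc 0 a))
    (R : ℝ)
    (hFa : ∀ x ∈ Icc (0:ℝ) a, ‖∫ t in (0:ℝ)..x, ((q t : ℝ) : ℂ) * E t‖ ≤ R) :
    ‖∫ x in (0:ℝ)..a, (((Qf a q x - Q0 a q : ℝ)) : ℂ)^2 * ((q x : ℝ) : ℂ) * E x‖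
      ≤ ((Q0 a q)^2 + 2 * ∫ t in (0:ℝ)..a,
          ‖(2/(a:ℂ)) * ((q t : ℝ) : ℂ) * (((Qf a q t - Q0 a q : ℝ)) : ℂ)‖) * R := by
  set c : ℝ := Q0 a q with hcdef
  set wC : ℝ → ℂ := fun t => (1/(a:ℂ)) * ((q t : ℝ) : ℂ) with hwCdef
  set QC : ℝ → ℂ := fun x => ∫ t in (0:ℝ)..x, wC t with hQCdef
  set φ : ℝ → ℂ := fun t => 2 * (wC t * QC t) - (2*(c:ℂ)) * wC t with hφdef
  set F : ℝ → ℂ := fun x => ∫ t in (0:ℝ)..x, ((q t : ℝ) : ℂ) * E t with hFdef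
  set P : ℝ → ℂ := fun x => ∫ t in (0:ℝ)..x, φ t with hPdef
  -- basic integrability
  have hqC : IntegrableOn (fun t => ((q t : ℝ) : ℂ)) (Icc 0 a) := hq.ofReal
  have hwC : IntegrableOn wC (Icc 0 a) := hqC.const_mul _
  have hII : ∀ {f : ℝ → ℂ}, IntegrableOn f (Icc 0 a) → ∀ {x : ℝ}, x ∈ Icc (0:ℝ) a →
      IntervalIntegrable f volume 0 x := by
    intro f hf x hx
    apply IntegrableOn.intervalIntegrable
    rw [uIcc_of_le hx.1]
    exact hf.mono_set (Icc_subset_Icc le_rfl hx.2)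
  have haIcc : a ∈ Icc (0:ℝ) a := ⟨ha.le, le_rfl⟩
  -- casts
  have hQcast : ∀ x : ℝ, ((Qf a q x : ℝ) : ℂ) = QC x := by
    intro x
    calc ((Qf a q x : ℝ) : ℂ) = (1/(a:ℂ)) * ((∫ t in (0:ℝ)..x, q t : ℝ) : ℂ) := by
          rw [Qf]; push_cast; ring
    _ = (1/(a:ℂ)) * ∫ t in (0:ℝ)..x, ((q t : ℝ) : ℂ) := by
          rw [intervalIntegral.integral_ofReal]
    _ = ∫ t in (0:ℝ)..x, wC t := (intervalIntegral.integral_const_mul _ _).symm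
  have hcast : ∀ x : ℝ, (((Qf a q x - c : ℝ)) : ℂ) = QC x - (c:ℂ) := by
    intro x
    push_cast
    rw [hQcast x]
  -- continuity of QC, P and bounds
  have hQCcont : ContinuousOn QC (Icc 0 a) := by
    rw [← uIcc_of_le ha.le]
    exact continuousOn_primitive_interval (by rwa [uIcc_of_le ha.le])
  obtain ⟨M, hM⟩ := isCompact_Icc.exists_bound_of_continuousOn hQCcont
  have hwQ : IntegrableOn (fun t => wC t * QC t) (Icc 0 a) := by
    have h := Integrable.bdd_mul (c := M) hwC
      (hQCcont.aestronglyMeasurable measurableSet_Icc)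
      ((ae_restrict_iff' measurableSet_Icc).2 (Filter.Eventually.of_forall hM))
    exact IntegrableOn.congr_fun h (fun t _ => mul_comm _ _) measurableSet_Icc
  have hφint : IntegrableOn φ (Icc 0 a) := (hwQ.const_mul 2).sub (hwC.const_mul _)
  have hPcont : ContinuousOn P (Icc 0 a) := by
    rw [← uIcc_of_le ha.le]
    exact continuousOn_primitive_interval (by rwa [uIcc_of_le ha.le])
  obtain ⟨N, hN⟩ := isCompact_Icc.exists_bound_of_continuousOn hPcont
  -- the square identity
  have hsq : ∀ x ∈ Icc (0:ℝ) a, (((Qf a q x - c : ℝ)) : ℂ)^2 = (c:ℂ)^2 + P x := by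
    intro x hx
    have h0x : IntegrableOn wC (Icc 0 x) := hwC.mono_set (Icc_subset_Icc le_rfl hx.2)
    have hsqp : (QC x)^2 = 2 * ∫ t in (0:ℝ)..x, wC t * QC t := sq_primitive hx.1 h0x
    have hPx : P x = 2*(∫ t in (0:ℝ)..x, wC t * QC t) - (2*(c:ℂ)) * QC x := by
      show (∫ t in (0:ℝ)..x, φ t) = _
      simp only [hφdef]
      rw [intervalIntegral.integral_sub ((hII hwQ hx).const_mul 2)
        ((hII hwC hx).const_mul _), intervalIntegral.integral_const_mul,
        intervalIntegral.integral_const_mul]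
    rw [hcast x, hPx]
    linear_combination hsqp
  -- rewriting the main integral
  have hI1 : (∫ x in (0:ℝ)..a, (((Qf a q x - c : ℝ)) : ℂ)^2 * ((q x : ℝ) : ℂ) * E x)
      = ∫ x in (0:ℝ)..a, ((c:ℂ)^2 + P x) * (((q x : ℝ) : ℂ) * E x) := by
    apply intervalIntegral.integral_congr
    intro x hx
    rw [uIcc_of_le ha.le] at hx
    show (((Qf a q x - c : ℝ)) : ℂ)^2 * ((q x : ℝ) : ℂ) * E x
        = ((c:ℂ)^2 + P x) * (((q x : ℝ) : ℂ) * E x)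
    rw [hsq x hx]; ring
  have hqEi : IntervalIntegrable (fun t => ((q t : ℝ) : ℂ) * E t) volume 0 a :=
    hII hqE haIcc
  have hφi : IntervalIntegrable φ volume 0 a := hII hφint haIcc
  have hPqE : IntegrableOn (fun x => P x * (((q x : ℝ) : ℂ) * E x)) (Icc 0 a) :=
    Integrable.bdd_mul (c := N) hqE
      (hPcont.aestronglyMeasurable measurableSet_Icc)
      ((ae_restrict_iff' measurableSet_Icc).2 (Filter.Eventually.of_forall hN))
  have hsplit : (∫ x in (0:ℝ)..a, ((c:ℂ)^2 + P x) * (((q x : ℝ) : ℂ) * E x))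
      = (c:ℂ)^2 * F a + ∫ x in (0:ℝ)..a, P x * (((q x : ℝ) : ℂ) * E x) := by
    have h1 : EqOn (fun x => ((c:ℂ)^2 + P x) * (((q x : ℝ) : ℂ) * E x))
        (fun x => (c:ℂ)^2 * (((q x : ℝ) : ℂ) * E x) + P x * (((q x : ℝ) : ℂ) * E x))
        (uIcc (0:ℝ) a) := fun x _ => by ring
    rw [intervalIntegral.integral_congr h1,
      intervalIntegral.integral_add (hqEi.const_mul _) (hII hPqE haIcc),
      intervalIntegral.integral_const_mul]
  have hswap : (∫ x in (0:ℝ)..a, P x * (((q x : ℝ) : ℂ) * E x))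
      = ∫ t in (0:ℝ)..a, φ t * ∫ x in t..a, ((q x : ℝ) : ℂ) * E x := by
    have h1 : (∫ x in (0:ℝ)..a, P x * (((q x : ℝ) : ℂ) * E x))
        = ∫ x in (0:ℝ)..a, (((q x : ℝ) : ℂ) * E x) * ∫ t in (0:ℝ)..x, φ t :=
      intervalIntegral.integral_congr (fun x _ => mul_comm _ _)
    rw [h1]
    exact swap_tri' ha.le hqE hφint
  -- bounds
  have hFaR : ∀ x ∈ Icc (0:ℝ) a, ‖F x‖ ≤ R := hFa
  have hX : ∀ t ∈ Icc (0:ℝ) a, ‖∫ x in t..a, ((q x : ℝ) : ℂ) * E x‖ ≤ 2*R := by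
    intro t ht
    have hsub : (∫ x in t..a, ((q x : ℝ) : ℂ) * E x) = F a - F t :=
      (integral_interval_sub_left hqEi (hII hqE ht)).symm
    rw [hsub]
    calc ‖F a - F t‖ ≤ ‖F a‖ + ‖F t‖ := norm_sub_le _ _
    _ ≤ R + R := add_le_add (hFaR a haIcc) (hFaR t ht)
    _ = 2*R := by ring
  have hXcont : ContinuousOn (fun t => ∫ x in t..a, ((q x : ℝ) : ℂ) * E x) (Icc 0 a) := by
    rw [← uIcc_of_le ha.le]
    exact continuousOn_primitive_interval_left (by rwa [uIcc_of_le ha.le])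
  have hXφ : IntegrableOn (fun t => (∫ x in t..a, ((q x : ℝ) : ℂ) * E x) * φ t) (Icc 0 a) :=
    Integrable.bdd_mul (c := 2*R) hφint
      (hXcont.aestronglyMeasurable measurableSet_Icc)
      ((ae_restrict_iff' measurableSet_Icc).2 (Filter.Eventually.of_forall hX))
  have hφX : IntegrableOn (fun t => φ t * ∫ x in t..a, ((q x : ℝ) : ℂ) * E x) (Icc 0 a) :=
    IntegrableOn.congr_fun hXφ (fun t _ => mul_comm _ _) measurableSet_Icc
  have hB : (∫ t in (0:ℝ)..a, ‖(2/(a:ℂ)) * ((q t : ℝ) : ℂ) * (((Qf a q t - c : ℝ)) : ℂ)‖)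
      = ∫ t in (0:ℝ)..a, ‖φ t‖ := by
    apply intervalIntegral.integral_congr
    intro t _
    show ‖(2/(a:ℂ)) * ((q t : ℝ) : ℂ) * (((Qf a q t - c : ℝ)) : ℂ)‖ = ‖φ t‖
    congr 1
    rw [hcast t, hφdef]
    show (2/(a:ℂ)) * ((q t : ℝ) : ℂ) * (QC t - (c:ℂ))
        = 2 * (wC t * QC t) - (2*(c:ℂ)) * wC t
    rw [hwCdef]
    show (2/(a:ℂ)) * ((q t : ℝ) : ℂ) * (QC t - (c:ℂ))
        = 2 * ((1/(a:ℂ)) * ((q t : ℝ) : ℂ) * QC t) - (2*(c:ℂ)) * ((1/(a:ℂ)) * ((q t : ℝ) : ℂ))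
    ring
  have hbound2 : ‖∫ t in (0:ℝ)..a, φ t * ∫ x in t..a, ((q x : ℝ) : ℂ) * E x‖
      ≤ (∫ t in (0:ℝ)..a, ‖φ t‖) * (2*R) := by
    calc ‖∫ t in (0:ℝ)..a, φ t * ∫ x in t..a, ((q x : ℝ) : ℂ) * E x‖
        ≤ ∫ t in (0:ℝ)..a, ‖φ t * ∫ x in t..a, ((q x : ℝ) : ℂ) * E x‖ :=
          intervalIntegral.norm_integral_le_integral_norm ha.le
    _ ≤ ∫ t in (0:ℝ)..a, ‖φ t‖ * (2*R) := by
        apply intervalIntegral.integral_mono_on ha.le ((hII hφX haIcc).norm)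
          (hφi.norm.mul_const _)
        intro t ht
        rw [norm_mul]
        exact mul_le_mul_of_nonneg_left (hX t ht) (norm_nonneg _)
    _ = (∫ t in (0:ℝ)..a, ‖φ t‖) * (2*R) := intervalIntegral.integral_mul_const _ _
  have hnormc : ‖(c:ℂ)^2 * F a‖ ≤ c^2 * R := by
    rw [norm_mul, norm_pow, Complex.norm_real, Real.norm_eq_abs, sq_abs]
    exact mul_le_mul_of_nonneg_left (hFaR a haIcc) (sq_nonneg c)
  rw [hI1, hsplit, hswap, hB]
  calc ‖(c:ℂ)^2 * F a + ∫ t in (0:ℝ)..a, φ t * ∫ x in t..a, ((q x : ℝ) : ℂ) * E x‖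
      ≤ ‖(c:ℂ)^2 * F a‖ + ‖∫ t in (0:ℝ)..a, φ t * ∫ x in t..a, ((q x : ℝ) : ℂ) * E x‖ :=
        norm_add_le _ _
  _ ≤ c^2 * R + (∫ t in (0:ℝ)..a, ‖φ t‖) * (2*R) := add_le_add hnormc hbound2
  _ = (c^2 + 2 * ∫ t in (0:ℝ)..a, ‖φ t‖) * R := by ring

/-- there is `C > 0` such that for every `m ≥ 1`,
`|∫₀^a (Q(x)−Q₀)² q(x) e^{−2(2m+2)π i x/a} dx| ≤ C ρ(m)`. -/
theorem statement13 (a : ℝ) (ha : 0 < a) (q : ℝ → ℝ)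
    (hq : MeasureTheory.IntegrableOn q (Set.Icc 0 a))
    (hper : ∀ x, q (x + a) = q x)
    (hc0 : fc a q 0 = 0) :
    ∃ C > (0:ℝ), ∀ m : ℕ, 1 ≤ m →
      ‖∫ x in (0:ℝ)..a, (((Qf a q x - Q0 a q : ℝ)) : ℂ)^2 * ((q x : ℝ) : ℂ)
          * e2 a (-(2*(m:ℤ)+2)) x‖
        ≤ C * rho a q m := by
  set K : ℝ := ∫ t in (0:ℝ)..a,
      ‖(2/(a:ℂ)) * ((q t : ℝ) : ℂ) * (((Qf a q t - Q0 a q : ℝ)) : ℂ)‖ with hKdef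
  have hK0 : 0 ≤ K :=
    intervalIntegral.integral_nonneg ha.le (fun t _ => norm_nonneg _)
  refine ⟨(Q0 a q)^2 + 2*K + 1, by nlinarith [sq_nonneg (Q0 a q)], ?_⟩
  intro m _
  have he1 : ∀ (n : ℤ) (x : ℝ), ‖e2 a n x‖ = 1 := by
    intro n x
    rw [e2]; exact Complex.norm_exp_ofReal_mul_I _
  have hecont : ∀ n : ℤ, Continuous (e2 a n) := by
    intro n
    apply Complex.continuous_exp.comp
    exact (Complex.continuous_ofReal.comp (by continuity)).mul continuous_const
  have hqE : ∀ n : ℤ, IntegrableOn (fun t => ((q t : ℝ) : ℂ) * e2 a n t) (Icc 0 a) := by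
    intro n
    have h := Integrable.bdd_mul (c := 1) hq.ofReal
      ((hecont n).aestronglyMeasurable) (Filter.Eventually.of_forall fun x => le_of_eq (he1 n x))
    exact IntegrableOn.congr_fun h (fun t _ => mul_comm _ _) measurableSet_Icc
  have hcont : ContinuousOn
      (fun x => ∫ t in (0:ℝ)..x, ((q t : ℝ) : ℂ) * e2 a (-(2*(m:ℤ)+2)) t) (Icc 0 a) := by
    rw [← uIcc_of_le ha.le]
    exact continuousOn_primitive_interval (by rw [uIcc_of_le ha.le]; exact hqE _)
  have hbdd : BddAbove (Set.range (fun x : Set.Icc (0:ℝ) a =>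
      ‖∫ t in (0:ℝ)..(x : ℝ), ((q t : ℝ) : ℂ) * e2 a (-(2*(m:ℤ)+2)) t‖)) := by
    rw [show (fun x : Set.Icc (0:ℝ) a =>
        ‖∫ t in (0:ℝ)..(x : ℝ), ((q t : ℝ) : ℂ) * e2 a (-(2*(m:ℤ)+2)) t‖)
      = (Set.Icc (0:ℝ) a).domRestrict
        (fun x => ‖∫ t in (0:ℝ)..x, ((q t : ℝ) : ℂ) * e2 a (-(2*(m:ℤ)+2)) t‖) from rfl,
      Set.range_domRestrict]
    exact (isCompact_Icc.bddAbove_image hcont.norm)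
  have hFa : ∀ x ∈ Icc (0:ℝ) a,
      ‖∫ t in (0:ℝ)..x, ((q t : ℝ) : ℂ) * e2 a (-(2*(m:ℤ)+2)) t‖ ≤ rho a q m := by
    intro x hx
    unfold rho
    refine le_trans ?_ (le_max_left _ _)
    exact le_ciSup hbdd ⟨x, hx⟩
  have hrho0 : 0 ≤ rho a q m := by
    have h0 := hFa 0 ⟨le_rfl, ha.le⟩
    simpa using h0
  have hmain := main_bound a ha q hq (e2 a (-(2*(m:ℤ)+2))) (hqE _) (rho a q m) hFa
  refine le_trans hmain ?_
  have : ((Q0 a q)^2 + 2*K + 1) * rho a q m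
      = ((Q0 a q)^2 + 2*K) * rho a q m + rho a q m := by ring
  rw [this, ← hKdef]
  nlinarith [hrho0]
end
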